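/- arXiv:1307.7081 — 8 statements merged into one kernel-verified Lean document; each statement's English description precedes it below -/
import Mathlib

section
/- Let D be a domain in ℂ^m and let E be a bounded domain in ℂ^N containing 0 such that for every r ∈ (0,1) the closure of rE is contained in E. Let λ_1,…,λ_n be distinct points of D and z_1,…,z_n ∈ E. If the interpolation data λ_j ↦ z_j are co-robustly solvable for hol(D,E), then they are not co-extremally solvable; that is, there exist a compact set K contained in E and a holomorphic map h : D → K with h(λ_j) = z_j for j = 1,…,n. Consequently, if the data are co-extremally solvable then they are co-barely solvable. -/
open Set
open scoped Pointwise

/-- Let `D` be a domain in `ℂ^m` and `E` a bounded domain in `ℂ^N`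
containing `0` such that for all `r ∈ (0,1)` the closure of `r • E` is contained in `E`.
If the interpolation data `λ_j ↦ z_j` are co-robustly solvable for `hol(D,E)`, then they
are not co-extremally solvable: there exist a compact `K ⊆ E` and a holomorphic
`h : D → K` with `h (λ j) = z j`. -/
theorem corobustly_solvable_not_coextremally_solvable
    {m N n : ℕ} (D : Set (Fin m → ℂ)) (E : Set (Fin N → ℂ))
    (hDopen : IsOpen D) (hDconn : IsConnected D)
    (hEopen : IsOpen E) (hEconn : IsConnected E) (hEbdd : Bornology.IsBounded E)
    (h0E : (0 : Fin N → ℂ) ∈ E)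
    (hshrink : ∀ r : ℝ, r ∈ Ioo (0:ℝ) 1 → closure ((fun x => r • x) '' E) ⊆ E)
    (lam : Fin n → (Fin m → ℂ)) (hlam : ∀ j, lam j ∈ D)
    (hinj : Function.Injective lam)
    (z : Fin n → (Fin N → ℂ)) (hz : ∀ j, z j ∈ E)
    (hcorobust : ∃ U : Fin n → Set (Fin N → ℂ),
      (∀ j, IsOpen (U j) ∧ z j ∈ U j ∧ U j ⊆ E) ∧
      ∀ z' : Fin n → (Fin N → ℂ), (∀ j, z' j ∈ U j) →
        ∃ h : (Fin m → ℂ) → (Fin N → ℂ),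
          DifferentiableOn ℂ h D ∧ MapsTo h D E ∧ ∀ j, h (lam j) = z' j) :
    ∃ K : Set (Fin N → ℂ), IsCompact K ∧ K ⊆ E ∧
      ∃ h : (Fin m → ℂ) → (Fin N → ℂ),
        DifferentiableOn ℂ h D ∧ MapsTo h D K ∧ ∀ j, h (lam j) = z j := by
  obtain ⟨U, hU, hsolve⟩ := hcorobust
  -- For r close to 1, r⁻¹ • z j ∈ U j for all j
  have hcont : ∀ j : Fin n, ∀ᶠ r in nhdsWithin (1:ℝ) (Ioo 0 1), r⁻¹ • z j ∈ U j := by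
    intro j
    have hc : ContinuousAt (fun r : ℝ => r⁻¹ • z j) 1 :=
      (continuousAt_inv₀ one_ne_zero).smul continuousAt_const
    have hmem : U j ∈ nhds ((1:ℝ)⁻¹ • z j) := by
      have := (hU j).1.mem_nhds (hU j).2.1
      simpa using this
    exact (hc.eventually_mem hmem).filter_mono nhdsWithin_le_nhds
  have hall : ∀ᶠ r in nhdsWithin (1:ℝ) (Ioo 0 1), ∀ j, r⁻¹ • z j ∈ U j :=
    Filter.eventually_all.mpr hcont
  have hNB : (nhdsWithin (1:ℝ) (Ioo 0 1)).NeBot := by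
    refine mem_closure_iff_nhdsWithin_neBot.mp ?_
    rw [closure_Ioo (zero_ne_one)]
    exact ⟨zero_le_one, le_refl 1⟩
  obtain ⟨r, hrU, hrIoo⟩ := (hall.and eventually_mem_nhdsWithin).exists
  have hr0 : r ≠ 0 := ne_of_gt hrIoo.1
  obtain ⟨g, hgdiff, hgmaps, hginterp⟩ := hsolve (fun j => r⁻¹ • z j) hrU
  refine ⟨closure ((fun x => r • x) '' E), ?_, hshrink r hrIoo,
    fun x => r • g x, hgdiff.const_smul r, ?_, ?_⟩
  · refine Metric.isCompact_of_isClosed_isBounded isClosed_closure ?_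
    exact Bornology.IsBounded.closure (by simpa [Set.image_smul] using hEbdd.smul₀ r)
  · intro x hx
    exact subset_closure (mem_image_of_mem _ (hgmaps hx))
  · intro j
    simp only [hginterp j]
    exact smul_inv_smul₀ hr0 (z j)
end

section
/- Let E = (1/4)𝔻 ∪ (𝔻 ∩ {z ∈ ℂ : Im z < 0}), where 𝔻 is the open unit disc in ℂ. Then E is a domain that is starlike about 0, but the closure of (1/2)E is not contained in E. Hence the property 'for all r ∈ (0,1), the closure of rE is contained in E' is strictly stronger than being starlike about 0. -/
open Set Metric

/-- The set `E = (1/4)𝔻 ∪ (𝔻 ∩ {Im z < 0})` is a domain (open and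
connected) which is starlike about `0`, yet the closure of `(1/2)E` is not contained
in `E`. -/
theorem starlike_but_half_closure_not_subset :
    letI E : Set ℂ := ball (0:ℂ) (1/4) ∪ (ball (0:ℂ) 1 ∩ {z : ℂ | z.im < 0})
    IsOpen E ∧ IsConnected E ∧
      (∀ x ∈ E, ∀ t : ℝ, t ∈ Icc (0:ℝ) 1 → t • x ∈ E) ∧
      ¬ closure ((fun z : ℂ => (1/2 : ℂ) * z) '' E) ⊆ E := by
  set E : Set ℂ := ball (0:ℂ) (1/4) ∪ (ball (0:ℂ) 1 ∩ {z : ℂ | z.im < 0}) with hE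
  have hEopen : IsOpen E :=
    (isOpen_ball).union ((isOpen_ball).inter (isOpen_lt Complex.continuous_im continuous_const))
  refine ⟨hEopen, ?_, ?_, ?_⟩
  · -- connected
    have h1 : IsConnected (ball (0:ℂ) (1/4)) :=
      (convex_ball _ _).isConnected ⟨0, by simp⟩
    have hb4 : -Complex.I/8 ∈ ball (0:ℂ) (1/4) := by
      simp [mem_ball]; norm_num
    have hb1 : -Complex.I/8 ∈ ball (0:ℂ) 1 := by
      simp [mem_ball]; norm_num
    have him : (-Complex.I/8 : ℂ).im < 0 := by
      simp; norm_num
    have h2 : IsConnected (ball (0:ℂ) 1 ∩ {z : ℂ | z.im < 0}) :=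
      ((convex_ball _ _).inter (convex_halfSpace_im_lt 0)).isConnected
        ⟨-Complex.I/8, hb1, him⟩
    exact h1.union ⟨-Complex.I/8, hb4, hb1, him⟩ h2
  · -- starlike
    rintro x hx t ⟨ht0, ht1⟩
    have hnorm : ‖t • x‖ = t * ‖x‖ := by
      rw [norm_smul, Real.norm_eq_abs, abs_of_nonneg ht0]
    have hle : ‖t • x‖ ≤ ‖x‖ := by
      rw [hnorm]
      calc t * ‖x‖ ≤ 1 * ‖x‖ := by
            exact mul_le_mul_of_nonneg_right ht1 (norm_nonneg x)
        _ = ‖x‖ := one_mul _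
    rcases hx with hx | ⟨hx1, hx2⟩
    · left
      rw [mem_ball, dist_zero_right] at hx ⊢
      exact lt_of_le_of_lt hle hx
    · rcases eq_or_lt_of_le ht0 with h | h
      · left
        rw [mem_ball, dist_zero_right, ← h, zero_smul, norm_zero]
        norm_num
      · right
        refine ⟨?_, ?_⟩
        · rw [mem_ball, dist_zero_right] at hx1 ⊢
          exact lt_of_le_of_lt hle hx1
        · show (t • x).im < 0
          rw [Complex.smul_im]
          exact mul_neg_of_pos_of_neg h hx2
  · -- closure of half not subset
    intro h
    have hhalf : (1/2 : ℂ) ∈ closure ((fun z : ℂ => (1/2 : ℂ) * z) '' E) := by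
      have hseq : Filter.Tendsto (fun n : ℕ => (1:ℝ)/(n+2)) Filter.atTop (nhds 0) := by
        have h0 := (tendsto_one_div_atTop_nhds_zero_nat (𝕜 := ℝ)).comp (Filter.tendsto_add_atTop_nat 2)
        exact h0.congr (fun n => by push_cast [Function.comp]; ring)
      have hg : Continuous (fun t : ℝ => (1/2 : ℂ) * (((1 - t : ℝ) : ℂ) - ((t : ℝ) : ℂ) * Complex.I)) := by
        continuity
      have htend : Filter.Tendsto
          (fun n : ℕ => (1/2 : ℂ) * ((((1 - (1:ℝ)/(n+2)) : ℝ) : ℂ) - (((1:ℝ)/(n+2) : ℝ) : ℂ) * Complex.I))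
          Filter.atTop (nhds (1/2 : ℂ)) := by
        have h1 := (hg.tendsto 0).comp hseq
        simpa [Function.comp_def] using h1
      refine mem_closure_of_tendsto htend (Filter.Eventually.of_forall fun n => ?_)
      set a : ℝ := (1:ℝ)/(n+2) with ha
      have ha0 : 0 < a := by positivity
      have ha2 : a ≤ 1/2 := by
        rw [ha, div_le_div_iff₀ (by positivity) (by norm_num)]
        have : (0:ℝ) ≤ (n:ℝ) := n.cast_nonneg
        linarith
      refine ⟨((1 - a : ℝ) : ℂ) - (a : ℂ) * Complex.I, Or.inr ⟨?_, ?_⟩, rfl⟩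
      · rw [mem_ball, dist_zero_right]
        have hre : (((1 - a : ℝ) : ℂ) - (a : ℂ) * Complex.I).re = 1 - a := by simp
        have him : (((1 - a : ℝ) : ℂ) - (a : ℂ) * Complex.I).im = -a := by simp
        have hsq := Complex.sq_norm (((1 - a : ℝ) : ℂ) - (a : ℂ) * Complex.I)
        rw [Complex.normSq_apply, hre, him] at hsq
        have habs : (0:ℝ) ≤ ‖(((1 - a : ℝ) : ℂ) - (a : ℂ) * Complex.I)‖ :=
          norm_nonneg _
        nlinarith
      · show (((1 - a : ℝ) : ℂ) - (a : ℂ) * Complex.I).im < 0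
        simp [ha0]
    have := h hhalf
    rcases this with h1 | ⟨_, h2⟩
    · rw [mem_ball, dist_zero_right] at h1
      simp at h1
      norm_num at h1
    · simp at h2
end

section
/- For every r with 0 < r < 1, the closure of r·G is contained in G; that is, every point (s,p) in the closure of {(rs', r²p') : (s',p') ∈ G} belongs to G. -/
open Set Metric

/-- **Lemma `strongstarlike`.** For `0 < r < 1`, the closure of
`r·G = {(rs, r²p) : (s,p) ∈ G}` is contained in the open symmetrized bidisc `G`. -/
theorem closure_dilate_symmetrized_bidisc_subset
    (G : Set (ℂ × ℂ))
    (hG : G = {x : ℂ × ℂ | ∃ z w : ℂ, ‖z‖ < 1 ∧ ‖w‖ < 1 ∧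
      x = (z + w, z * w)})
    (r : ℝ) (hr : r ∈ Ioo (0:ℝ) 1) :
    closure ((fun x : ℂ × ℂ => ((r : ℂ) * x.1, (r : ℂ)^2 * x.2)) '' G) ⊆ G := by
  obtain ⟨hr0, hr1⟩ := hr
  set K : Set (ℂ × ℂ) :=
    (fun p : ℂ × ℂ => (p.1 + p.2, p.1 * p.2)) ''
      (closedBall (0:ℂ) r ×ˢ closedBall (0:ℂ) r) with hK
  have hKc : IsCompact K := by
    exact ((isCompact_closedBall (0:ℂ) r).prod (isCompact_closedBall (0:ℂ) r)).image
      (by continuity)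
  have h1 : (fun x : ℂ × ℂ => ((r : ℂ) * x.1, (r : ℂ)^2 * x.2)) '' G ⊆ K := by
    rintro _ ⟨x, hx, rfl⟩
    rw [hG] at hx
    obtain ⟨z, w, hz, hw, rfl⟩ := hx
    refine ⟨((r:ℂ) * z, (r:ℂ) * w), ⟨?_, ?_⟩, ?_⟩
    · simp only [mem_closedBall, dist_zero_right, norm_mul,
        Complex.norm_real, Real.norm_eq_abs, abs_of_pos hr0]
      nlinarith
    · simp only [mem_closedBall, dist_zero_right, norm_mul,
        Complex.norm_real, Real.norm_eq_abs, abs_of_pos hr0]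
      nlinarith
    · simp only [Prod.mk.injEq]; constructor <;> ring
  have h2 : K ⊆ G := by
    rintro _ ⟨⟨z, w⟩, ⟨hz, hw⟩, rfl⟩
    rw [hG]
    refine ⟨z, w, ?_, ?_, rfl⟩
    · simp only [mem_closedBall, dist_zero_right] at hz
      linarith
    · simp only [mem_closedBall, dist_zero_right] at hw
      linarith
  calc closure ((fun x : ℂ × ℂ => ((r : ℂ) * x.1, (r : ℂ)^2 * x.2)) '' G)
      ⊆ closure K := closure_mono h1
    _ = K := hKc.isClosed.closure_eq
    _ ⊆ G := h2
end

section
/- For all z ∈ ℂ with |z| = 1, all (s,p) ∈ Γ and all r with 0 < r < 1, one has 2 − zrs ≠ 0 and 1 − |Φ(z, rs, r²p)|² ≥ (1−r)²/(1+r)²; in particular |Φ(z, rs, r²p)| < 1. -/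
open Set

/-- The function `Φ(λ, s, p) = (2λp − s)/(2 − λs)`. -/
noncomputable def Phi (l s p : ℂ) : ℂ := (2 * l * p - s) / (2 - l * s)

private lemma key_poly (t x y : ℝ) (ht0 : 0 ≤ t) (ht1 : t ≤ 1) (hx0 : 0 ≤ x) (hx1 : x ≤ 1)
    (hy0 : 0 ≤ y) (hy1 : y ≤ 1) :
    4*(1 - t^2*x^2*y^2) - 4*t*(x*(1-y^2) + y*(1-x^2)) - (1-t^2)*(x+y)^2 ≥ 0 := by
  have hx1' : (0:ℝ) ≤ 1 - x := by linarith
  have hy1' : (0:ℝ) ≤ 1 - y := by linarith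
  have ht1' : (0:ℝ) ≤ 1 - t := by linarith
  have hG : 2*(x+y)*(1-x*y) - (x+y)^2 + 4*x^2*y^2 ≥ 0 := by
    nlinarith [mul_nonneg hx0 hy0, mul_nonneg hx1' hy1',
      sq_nonneg (x-y), sq_nonneg (x+y-2*x*y), sq_nonneg (1-x*y),
      mul_nonneg (mul_nonneg hx0 hy0) (mul_nonneg hx1' hy1'),
      sq_nonneg (x*y), sq_nonneg (x+y)]
  have hxy0 : 0 ≤ x*y := mul_nonneg hx0 hy0
  have hsum : 2*(x*y) ≤ x + y := by nlinarith [mul_nonneg hx0 hy1', mul_nonneg hy0 hx1']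
  have hB : (0:ℝ) ≤ (x+y)^2 - 4*x^2*y^2 := by
    nlinarith [mul_nonneg (by linarith : (0:ℝ) ≤ x+y-2*(x*y)) (by linarith : (0:ℝ) ≤ x+y+2*(x*y))]
  have hA : 0 ≤ (1-t) * (2*(x+y)*(1-x*y) - (x+y)^2 + 4*x^2*y^2) := mul_nonneg ht1' hG
  have hB2 : 0 ≤ (1-t)^2 * ((x+y)^2 - 4*x^2*y^2) := mul_nonneg (sq_nonneg _) hB
  have hC : 0 ≤ (1-x)*((1-y)*(1-x*y)) :=
    mul_nonneg hx1' (mul_nonneg hy1' (by nlinarith))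
  nlinarith [hA, hB2, hC]

set_option maxHeartbeats 1600000 in
/-- For `|z| = 1`, `(s,p) ∈ Γ` (the closed symmetrized bidisc) and
`0 < r < 1`, one has `2 − zrs ≠ 0` and `1 − |Φ(z, rs, r²p)|² ≥ (1−r)²/(1+r)²`; in
particular `|Φ(z, rs, r²p)| < 1`. -/
theorem Phi_dilate_bound (z s p : ℂ) (hz : ‖z‖ = 1)
    (hsp : (s, p) ∈ {x : ℂ × ℂ | ∃ z w : ℂ, ‖z‖ ≤ 1 ∧ ‖w‖ ≤ 1 ∧
      x = (z + w, z * w)})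
    (r : ℝ) (hr : r ∈ Ioo (0:ℝ) 1) :
    2 - z * (r : ℂ) * s ≠ 0 ∧
    1 - (‖Phi z ((r : ℂ) * s) ((r : ℂ)^2 * p)‖)^2 ≥ (1 - r)^2 / (1 + r)^2 ∧
    ‖Phi z ((r : ℂ) * s) ((r : ℂ)^2 * p)‖ < 1 := by
  obtain ⟨hr0, hr1⟩ := hr
  obtain ⟨a, b, ha, hb, heq⟩ := hsp
  have hs : s = a + b := by simpa using congrArg Prod.fst heq
  have hp : p = a * b := by simpa using congrArg Prod.snd heq
  subst hs; subst hp
  set l : ℂ := (r : ℂ) * z with hl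
  set x : ℝ := ‖a‖ with hxdef
  set y : ℝ := ‖b‖ with hydef
  have hx0 : 0 ≤ x := norm_nonneg a
  have hy0 : 0 ≤ y := norm_nonneg b
  have hx1 : x ≤ 1 := ha
  have hy1 : y ≤ 1 := hb
  have habsl : ‖l‖ = r := by
    rw [hl, norm_mul, Complex.norm_real, Real.norm_eq_abs, hz, abs_of_pos hr0, mul_one]
  have hnl : Complex.normSq l = r^2 := by rw [← Complex.sq_norm, habsl]
  have hna : Complex.normSq a = x^2 := by rw [← Complex.sq_norm]
  have hnb : Complex.normSq b = y^2 := by rw [← Complex.sq_norm]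
  set w : ℂ := a * (1 - (Complex.normSq b : ℂ)) + b * (1 - (Complex.normSq a : ℂ)) with hw
  -- identity
  have hid : Complex.normSq (2 - l*(a+b)) - Complex.normSq (2*l*(a*b) - (a+b))
      = 4*(1 - Complex.normSq l * Complex.normSq a * Complex.normSq b)
        - 4*(l*w).re - (1 - Complex.normSq l)*Complex.normSq (a+b) := by
    simp only [hw, Complex.normSq_apply, Complex.mul_re, Complex.mul_im, Complex.add_re,
      Complex.add_im, Complex.sub_re, Complex.sub_im, Complex.ofReal_re, Complex.ofReal_im,
      Complex.one_re, Complex.one_im]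
    norm_num
    ring
  -- bound on (l*w).re
  have habsw : ‖w‖ ≤ x*(1-y^2) + y*(1-x^2) := by
    have h1 : ‖a * (1 - (Complex.normSq b : ℂ))‖ = x * (1 - y^2) := by
      rw [norm_mul]
      congr 1
      rw [show (1 : ℂ) - (Complex.normSq b : ℂ) = ((1 - Complex.normSq b : ℝ) : ℂ) by
          push_cast; ring,
        Complex.norm_real, Real.norm_eq_abs, hnb, abs_of_nonneg (by nlinarith)]
    have h2 : ‖b * (1 - (Complex.normSq a : ℂ))‖ = y * (1 - x^2) := by
      rw [norm_mul]
      congr 1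
      rw [show (1 : ℂ) - (Complex.normSq a : ℂ) = ((1 - Complex.normSq a : ℝ) : ℂ) by
          push_cast; ring,
        Complex.norm_real, Real.norm_eq_abs, hna, abs_of_nonneg (by nlinarith)]
    calc ‖w‖ ≤ ‖a * (1 - (Complex.normSq b : ℂ))‖
        + ‖b * (1 - (Complex.normSq a : ℂ))‖ := norm_add_le _ _
      _ = x*(1-y^2) + y*(1-x^2) := by rw [h1, h2]
  have hre : (l*w).re ≤ r * (x*(1-y^2) + y*(1-x^2)) := by
    calc (l*w).re ≤ ‖l*w‖ := Complex.re_le_norm _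
      _ = r * ‖w‖ := by rw [norm_mul, habsl]
      _ ≤ r * (x*(1-y^2) + y*(1-x^2)) := by
          exact mul_le_mul_of_nonneg_left habsw (le_of_lt hr0)
  -- bound on normSq (a+b)
  have hns : Complex.normSq (a+b) ≤ (x+y)^2 := by
    rw [← Complex.sq_norm]
    have : ‖a+b‖ ≤ x + y := norm_add_le a b
    nlinarith [norm_nonneg (a+b)]
  have hns' : (1 - r^2) * Complex.normSq (a+b) ≤ (1 - r^2) * (x+y)^2 :=
    mul_le_mul_of_nonneg_left hns (by nlinarith)
  -- key inequality on normSq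
  have hF := key_poly r x y (le_of_lt hr0) (le_of_lt hr1) hx0 hx1 hy0 hy1
  have hkey2 : Complex.normSq (2*l*(a*b) - (a+b)) ≤ Complex.normSq (2 - l*(a+b)) := by
    have := hid
    rw [hnl, hna, hnb] at this
    nlinarith [this, hre, hns', hF]
  have hkey : ‖2*l*(a*b) - (a+b)‖ ≤ ‖2 - l*(a+b)‖ := by
    rw [Complex.norm_def, Complex.norm_def]
    exact Real.sqrt_le_sqrt hkey2
  -- denominator nonzero
  have hDabs : ‖l*(a+b)‖ < 2 := by
    rw [norm_mul, habsl]
    calc r * ‖a+b‖ ≤ r * (x+y) :=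
        mul_le_mul_of_nonneg_left (norm_add_le a b) (le_of_lt hr0)
      _ < 2 := by nlinarith
  have hD : (2 : ℂ) - l*(a+b) ≠ 0 := by
    intro h
    have h2 : (2:ℂ) = l*(a+b) := by linear_combination h
    have := congrArg norm h2
    simp only [Complex.norm_two] at this
    rw [← this] at hDabs
    exact lt_irrefl _ hDabs
  have hD' : 2 - z * (r : ℂ) * ((a:ℂ)+b) ≠ 0 := by
    have : 2 - z * (r : ℂ) * ((a:ℂ)+b) = 2 - l*(a+b) := by rw [hl]; ring
    rw [this]; exact hD
  -- Phi rewriting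
  have hPhi : Phi z ((r : ℂ) * (a+b)) ((r : ℂ)^2 * (a*b))
      = (r : ℂ) * ((2*l*(a*b) - (a+b)) / (2 - l*(a+b))) := by
    unfold Phi
    rw [show 2 * z * ((r:ℂ)^2 * (a*b)) - (r:ℂ) * (a+b) = (r:ℂ) * (2*l*(a*b) - (a+b)) by
        rw [hl]; ring,
      show (2:ℂ) - z * ((r:ℂ) * (a+b)) = 2 - l*(a+b) by rw [hl]; ring,
      mul_div_assoc]
  have hPhiAbs : ‖Phi z ((r : ℂ) * (a+b)) ((r : ℂ)^2 * (a*b))‖ ≤ r := by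
    rw [hPhi, norm_mul, Complex.norm_real, Real.norm_eq_abs, abs_of_pos hr0, norm_div]
    have hden : 0 < ‖2 - l*(a+b)‖ := (norm_pos_iff.mpr hD)
    have h1 : ‖2*l*(a*b) - (a+b)‖ / ‖2 - l*(a+b)‖ ≤ 1 :=
      (div_le_one hden).2 hkey
    nlinarith [norm_nonneg (2*l*(a*b) - (a+b)), hden, h1]
  refine ⟨hD', ?_, ?_⟩
  · have hφ0 : 0 ≤ ‖Phi z ((r : ℂ) * (a+b)) ((r : ℂ)^2 * (a*b))‖ :=
      norm_nonneg _
    have hsq : (‖Phi z ((r : ℂ) * (a+b)) ((r : ℂ)^2 * (a*b))‖)^2 ≤ r^2 := by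
      nlinarith
    have hdiv : (1 - r)^2 / (1 + r)^2 ≤ 1 - r^2 := by
      rw [div_le_iff₀ (by positivity)]
      nlinarith [mul_nonneg (mul_nonneg (by linarith : (0:ℝ) ≤ 1 - r) (le_of_lt hr0))
        (by nlinarith : (0:ℝ) ≤ r^2 + 3*r + 4)]
    linarith
  · exact lt_of_le_of_lt hPhiAbs hr1
end

section
/- For every ρ with 0 < ρ < 1, every λ ∈ ℂ with |λ| ≤ 1 and every (s,p) ∈ Γ, one has 2 − λρs ≠ 0 and |Φ(λ, ρs, ρ²p)| ≤ ρ; that is, Φ maps the closed unit disc times ρ·Γ into the closed disc of radius ρ. -/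
open Set

open Complex in
private lemma normSq_le_one_of_abs_le_one {u : ℂ} (hu : ‖u‖ ≤ 1) :
    Complex.normSq u ≤ 1 := by
  rw [← Complex.sq_norm]
  nlinarith [norm_nonneg u]

open Complex in
/-- Core inequality: `|s − 2cp| ≤ |2 − cs|` on the closed tridisc. -/
private lemma core (z w c : ℂ) (hz : ‖z‖ ≤ 1) (hw : ‖w‖ ≤ 1)
    (hc : ‖c‖ ≤ 1) :
    ‖(z + w) - 2 * c * (z * w)‖ ≤ ‖2 - c * (z + w)‖ := by
  have hz' : normSq z ≤ 1 := normSq_le_one_of_abs_le_one hz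
  have hw' : normSq w ≤ 1 := normSq_le_one_of_abs_le_one hw
  have hc' : normSq c ≤ 1 := normSq_le_one_of_abs_le_one hc
  have hA : (0:ℝ) ≤ normSq (1 - c * z) := normSq_nonneg _
  have hB : (0:ℝ) ≤ normSq (1 - c * w) := normSq_nonneg _
  have hG : (0:ℝ) ≤ normSq (1 - w * (starRingEnd ℂ) z) := normSq_nonneg _
  -- identity 1
  have id1 : normSq (2 - c * (z + w)) - normSq ((z + w) - 2 * c * (z * w)) =
      (1 - normSq w) * normSq (1 - c * z) + (1 - normSq z) * normSq (1 - c * w) +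
      2 * ((1 - c * z) * (starRingEnd ℂ) (1 - c * w) * (1 - w * (starRingEnd ℂ) z)).re := by
    simp only [map_sub, map_mul, map_one, Complex.normSq_apply, Complex.mul_re,
      Complex.mul_im, Complex.sub_re, Complex.sub_im, Complex.add_re, Complex.add_im,
      Complex.one_re, Complex.one_im, Complex.re_ofNat, Complex.im_ofNat,
      Complex.conj_re, Complex.conj_im]
    ring
  -- identity 2
  have id2 : 2 * ((1 - c * z) * (starRingEnd ℂ) (1 - c * w) * (1 - w * (starRingEnd ℂ) z)).re =
      (1 - normSq z) * normSq (1 - c * w) + (1 - normSq c) * normSq (1 - w * (starRingEnd ℂ) z) +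
      (1 - normSq w) * normSq (1 - c * z) -
      (1 - normSq z) * (1 - normSq c) * (1 - normSq w) := by
    simp only [map_sub, map_mul, map_one, Complex.normSq_apply, Complex.mul_re,
      Complex.mul_im, Complex.sub_re, Complex.sub_im, Complex.add_re, Complex.add_im,
      Complex.one_re, Complex.one_im, Complex.re_ofNat, Complex.im_ofNat,
      Complex.conj_re, Complex.conj_im]
    ring
  -- (1 - |c|²)(1 - |w|²) ≤ |1 - cw|²
  have hcw : (1 - normSq c) * (1 - normSq w) ≤ normSq (1 - c * w) := by
    have h1 : ‖c * w‖ ≤ 1 := by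
      rw [norm_mul]
      exact mul_le_one₀ hc (norm_nonneg w) hw
    have h2 : 1 - ‖c * w‖ ≤ ‖1 - c * w‖ := by
      have := norm_sub_norm_le (1:ℂ) (c * w)
      simpa using this
    have h3 : (1 - ‖c * w‖)^2 ≤ normSq (1 - c * w) := by
      rw [← Complex.sq_norm]
      have h0 : (0:ℝ) ≤ 1 - ‖c * w‖ := by linarith
      nlinarith
    have h4 : (1 - normSq c) * (1 - normSq w) ≤ (1 - ‖c * w‖)^2 := by
      rw [norm_mul, ← Complex.sq_norm, ← Complex.sq_norm]
      nlinarith [sq_nonneg (‖c‖ - ‖w‖), norm_nonneg c,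
        norm_nonneg w]
    linarith
  have key : normSq ((z + w) - 2 * c * (z * w)) ≤ normSq (2 - c * (z + w)) := by
    nlinarith [mul_nonneg (by linarith : (0:ℝ) ≤ 1 - normSq w) hA,
      mul_nonneg (by linarith : (0:ℝ) ≤ 1 - normSq z) hB,
      mul_nonneg (by linarith : (0:ℝ) ≤ 1 - normSq c) hG,
      mul_le_mul_of_nonneg_left hcw (by linarith : (0:ℝ) ≤ 1 - normSq z)]
  rw [Complex.norm_def, Complex.norm_def]
  exact Real.sqrt_le_sqrt key

/-- For `0 < ρ < 1`, `|λ| ≤ 1` and `(s,p) ∈ Γ` (the closed symmetrized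
bidisc), one has `2 − λρs ≠ 0` and `|Φ(λ, ρs, ρ²p)| ≤ ρ`:  `Φ` maps the closed unit
disc times `ρ·Γ` into the closed disc of radius `ρ`. -/
theorem Phi_maps_dilated_Gamma (ρ : ℝ) (hρ : ρ ∈ Ioo (0:ℝ) 1)
    (lam : ℂ) (hlam : ‖lam‖ ≤ 1) (s p : ℂ)
    (hsp : (s, p) ∈ {x : ℂ × ℂ | ∃ z w : ℂ, ‖z‖ ≤ 1 ∧ ‖w‖ ≤ 1 ∧
      x = (z + w, z * w)}) :
    2 - lam * (ρ : ℂ) * s ≠ 0 ∧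
    ‖Phi lam ((ρ : ℂ) * s) ((ρ : ℂ)^2 * p)‖ ≤ ρ := by
  obtain ⟨z, w, hz, hw, hx⟩ := hsp
  obtain ⟨hs, hp⟩ := Prod.mk.injEq .. ▸ hx
  simp only [Prod.mk.injEq] at hx
  have hs : s = z + w := hx.1
  have hp : p = z * w := hx.2
  obtain ⟨hρ0, hρ1⟩ := hρ
  set c : ℂ := lam * (ρ : ℂ) with hc_def
  have hcabs : ‖c‖ ≤ ρ := by
    rw [hc_def, norm_mul, Complex.norm_real, Real.norm_eq_abs, abs_of_pos hρ0]
    nlinarith [norm_nonneg lam]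
  have hc1 : ‖c‖ ≤ 1 := le_trans hcabs (le_of_lt hρ1)
  have hsabs : ‖s‖ ≤ 2 := by
    rw [hs]
    calc ‖z + w‖ ≤ ‖z‖ + ‖w‖ := norm_add_le z w
      _ ≤ 2 := by linarith
  -- denominator nonzero
  have hden_lb : ‖c * s‖ < 2 := by
    rw [norm_mul]
    calc ‖c‖ * ‖s‖ ≤ ρ * 2 := by
          apply mul_le_mul hcabs hsabs (norm_nonneg s) (le_of_lt hρ0)
      _ < 2 := by linarith
  have hden : (2 : ℂ) - c * s ≠ 0 := by
    intro h
    have h2 : (2 : ℂ) = c * s := sub_eq_zero.mp h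
    rw [← h2] at hden_lb
    simp at hden_lb
  have hden' : 2 - lam * (ρ : ℂ) * s ≠ 0 := by
    have : 2 - lam * (ρ : ℂ) * s = 2 - c * s := by rw [hc_def]
    rw [this]; exact hden
  refine ⟨hden', ?_⟩
  -- rewrite Phi
  have hPhi : Phi lam ((ρ : ℂ) * s) ((ρ : ℂ)^2 * p) =
      (ρ : ℂ) * ((2 * c * p - s) / (2 - c * s)) := by
    unfold Phi
    rw [mul_div_assoc']
    congr 1
    · rw [hc_def]; ring
    · rw [hc_def]; ring
  rw [hPhi, norm_mul, Complex.norm_real, Real.norm_eq_abs, abs_of_pos hρ0]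
  have habs_den_pos : 0 < ‖2 - c * s‖ := by
    simpa [norm_pos_iff] using hden
  have hfrac : ‖(2 * c * p - s) / (2 - c * s)‖ ≤ 1 := by
    rw [norm_div, div_le_one habs_den_pos]
    have := core z w c hz hw hc1
    calc ‖2 * c * p - s‖ = ‖(z + w) - 2 * c * (z * w)‖ := by
          rw [hs, hp, ← norm_neg]
          congr 1
          ring
      _ ≤ ‖2 - c * (z + w)‖ := this
      _ = ‖2 - c * s‖ := by rw [hs]
  nlinarith [norm_nonneg ((2 * c * p - s) / (2 - c * s))]
end

section
/- Let λ_1,…,λ_n be distinct points of 𝔻 and z_1,…,z_n ∈ G, and suppose there exists a holomorphic map h : 𝔻 → Γ with h(λ_j) = z_j for all j. Suppose further that there exist a Blaschke product m of degree at most n and a Blaschke product q of degree at most n−1 such that Φ(m(λ_j), z_j) = q(λ_j) for j = 1,…,n (the data satisfy condition 𝒞 extremally). Then the data λ_j ↦ z_j are extremally solvable: there do not exist an open set U ⊆ ℂ containing the closed unit disc and a holomorphic map f : U → Γ with f(λ_j) = z_j for j = 1,…,n. -/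
open Set Metric

/-- The open symmetrized bidisc `G = {(z+w, zw) : z, w ∈ 𝔻}`. -/
def symBidisc : Set (ℂ × ℂ) :=
  {x : ℂ × ℂ | ∃ z w : ℂ, ‖z‖ < 1 ∧ ‖w‖ < 1 ∧ x = (z + w, z * w)}

/-- The closed symmetrized bidisc `Γ = {(z+w, zw) : |z| ≤ 1, |w| ≤ 1}`. -/
def symBidiscCl : Set (ℂ × ℂ) :=
  {x : ℂ × ℂ | ∃ z w : ℂ, ‖z‖ ≤ 1 ∧ ‖w‖ ≤ 1 ∧ x = (z + w, z * w)}

/-- `f` agrees on the open unit disc with a Blaschke product of degree at most `k`,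
i.e. with `λ ↦ c·∏ (λ − aᵢ)/(1 − conj(aᵢ)λ)` where `|c| = 1` and each `aᵢ ∈ 𝔻`. -/
def IsBlaschkeDegLE (k : ℕ) (f : ℂ → ℂ) : Prop :=
  ∃ (d : ℕ) (c : ℂ) (a : Fin d → ℂ), d ≤ k ∧ ‖c‖ = 1 ∧
    (∀ i, ‖a i‖ < 1) ∧
    ∀ lam ∈ ball (0:ℂ) 1,
      f lam = c * ∏ i, (lam - a i) / (1 - (starRingEnd ℂ) (a i) * lam)

noncomputable def Complex.abs : AbsoluteValue ℂ ℝ :=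
  IsAbsoluteValue.toAbsoluteValue (norm : ℂ → ℝ)

lemma Complex.norm_eq_abs (z : ℂ) : ‖z‖ = Complex.abs z := rfl

lemma Complex.abs_apply (z : ℂ) : Complex.abs z = Real.sqrt (Complex.normSq z) := Complex.norm_def z

lemma Complex.abs_conj (z : ℂ) : Complex.abs ((starRingEnd ℂ) z) = Complex.abs z := Complex.norm_conj z

lemma Complex.sq_abs (z : ℂ) : Complex.abs z ^ 2 = Complex.normSq z := Complex.sq_norm z

lemma Complex.abs_ofReal (r : ℝ) : Complex.abs (r : ℂ) = |r| := Complex.norm_real r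

lemma Complex.abs_two : Complex.abs 2 = 2 := Complex.norm_two

lemma Complex.re_le_abs (z : ℂ) : z.re ≤ Complex.abs z := Complex.re_le_norm z

section AYhelpers
open Complex Polynomial

lemma normSq_factor_identity (a l : ℂ) :
    normSq (1 - (starRingEnd ℂ) a * l) - normSq (l - a) = (1 - normSq a) * (1 - normSq l) := by
  simp only [normSq_apply, mul_re, mul_im, sub_re, sub_im, one_re, one_im, conj_re, conj_im]
  ring

lemma sPradj (z w : ℂ) :
    (z+w) - (z*w)*(starRingEnd ℂ) (z+w)
      = (1 - (normSq w : ℂ))*z + (1 - (normSq z : ℂ))*w := by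
  have hz' : z * (starRingEnd ℂ) z = (normSq z : ℂ) := Complex.mul_conj z
  have hw' : w * (starRingEnd ℂ) w = (normSq w : ℂ) := Complex.mul_conj w
  simp only [map_add]
  linear_combination (-w) * hz' + (-z) * hw'

lemma key_core {z w ω : ℂ} (hz : Complex.abs z ≤ 1) (hw : Complex.abs w ≤ 1)
    (hω : Complex.abs ω ≤ 1) :
    2*(1-(Complex.abs z)^2*(Complex.abs w)^2)*(1-Complex.abs ω)^2
      + (1-(Complex.abs ω)^2)*((1-(Complex.abs z)^2)*(1-(Complex.abs w)^2)
          + (1-Complex.abs z*Complex.abs w)^2)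
      + 4*(Complex.abs ω)*((1-Complex.abs z)*(1-Complex.abs w)*(1-Complex.abs z*Complex.abs w))
    ≤ normSq (2 - ω*(z+w)) - normSq (2*ω*(z*w) - (z+w)) := by
  set x := Complex.abs z with hx
  set y := Complex.abs w with hy
  set r := Complex.abs ω with hr
  have hx0 : 0 ≤ x := Complex.abs.nonneg z
  have hy0 : 0 ≤ y := Complex.abs.nonneg w
  have hr0 : 0 ≤ r := Complex.abs.nonneg ω
  have hE : normSq (2 - ω*(z+w)) - normSq (2*ω*(z*w) - (z+w))
      = (1 - normSq ω)*(4 - normSq (z+w)) + 4*normSq ω*(1 - normSq (z*w))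
        - 4*(ω*((z+w) - (z*w)*(starRingEnd ℂ) (z+w))).re := by
    simp only [normSq_apply, mul_re, mul_im, sub_re, sub_im, add_re, add_im, one_re, one_im,
      conj_re, conj_im, re_ofNat, im_ofNat]
    ring
  rw [sPradj] at hE
  have h1 : normSq (z+w) ≤ (x+y)^2 := by
    have habs : Complex.abs (z+w) ≤ x + y := Complex.abs.add_le z w
    have := Complex.sq_abs (z+w)
    nlinarith [Complex.abs.nonneg (z+w)]
  have h2 : normSq (z*w) = x^2*y^2 := by
    rw [← Complex.sq_abs, map_mul]; ring
  have h2' : normSq ω = r^2 := by rw [← Complex.sq_abs]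
  have h3 : (ω*((1 - (normSq w : ℂ))*z + (1 - (normSq z : ℂ))*w)).re
      ≤ r*(x*(1-y^2) + y*(1-x^2)) := by
    have h31 : (ω*((1 - (normSq w : ℂ))*z + (1 - (normSq z : ℂ))*w)).re
        ≤ Complex.abs (ω*((1 - (normSq w : ℂ))*z + (1 - (normSq z : ℂ))*w)) :=
      Complex.re_le_abs _
    have h32 : Complex.abs ((1 - (normSq w : ℂ))*z + (1 - (normSq z : ℂ))*w)
        ≤ (1-y^2)*x + (1-x^2)*y := by
      refine (Complex.abs.add_le _ _).trans ?_
      rw [map_mul, map_mul]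
      have e1 : Complex.abs (1 - (normSq w : ℂ)) = 1 - y^2 := by
        rw [show (1 : ℂ) - (normSq w : ℂ) = ((1 - normSq w : ℝ) : ℂ) by push_cast; ring,
          Complex.abs_ofReal, _root_.abs_of_nonneg]
        · rw [← Complex.sq_abs]
        · rw [← Complex.sq_abs]; nlinarith
      have e2 : Complex.abs (1 - (normSq z : ℂ)) = 1 - x^2 := by
        rw [show (1 : ℂ) - (normSq z : ℂ) = ((1 - normSq z : ℝ) : ℂ) by push_cast; ring,
          Complex.abs_ofReal, _root_.abs_of_nonneg]
        · rw [← Complex.sq_abs]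
        · rw [← Complex.sq_abs]; nlinarith
      rw [e1, e2]
    rw [map_mul] at h31
    nlinarith [Complex.abs.nonneg ((1 - (normSq w : ℂ))*z + (1 - (normSq z : ℂ))*w)]
  rw [hE, h2, h2']
  have hr2 : (0:ℝ) ≤ 1 - r^2 := by nlinarith
  have hp := mul_le_mul_of_nonneg_left h1 hr2
  have hdec : (1-r^2)*(4-(x+y)^2) + 4*r^2*(1-x^2*y^2) - 4*(r*(x*(1-y^2)+y*(1-x^2)))
      = 2*(1-x^2*y^2)*(1-r)^2 + (1-r^2)*((1-x^2)*(1-y^2)+(1-x*y)^2)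
        + 4*r*((1-x)*(1-y)*(1-x*y)) := by ring
  linarith

lemma abs_le_abs_of_normSq_le {A B : ℂ} (h : normSq B ≤ normSq A) :
    Complex.abs B ≤ Complex.abs A := by
  rw [Complex.abs_apply, Complex.abs_apply]
  exact Real.sqrt_le_sqrt h

lemma abs_lt_abs_of_normSq_lt {A B : ℂ} (h : normSq B < normSq A) :
    Complex.abs B < Complex.abs A := by
  rw [Complex.abs_apply, Complex.abs_apply]
  exact Real.sqrt_lt_sqrt (normSq_nonneg B) h

lemma gamma_ineq {x : ℂ × ℂ} (hx : x ∈ symBidiscCl) {ω : ℂ} (hω : Complex.abs ω ≤ 1) :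
    Complex.abs (2*ω*x.2 - x.1) ≤ Complex.abs (2 - ω*x.1) := by
  obtain ⟨z, w, hz, hw, rfl⟩ := hx
  rw [Complex.norm_eq_abs] at hz hw
  refine abs_le_abs_of_normSq_le ?_
  have h := key_core hz hw hω
  set X := Complex.abs z with hXdef
  set Y := Complex.abs w with hYdef
  set R := Complex.abs ω with hRdef
  have hX0 : 0 ≤ X := Complex.abs.nonneg z
  have hY0 : 0 ≤ Y := Complex.abs.nonneg w
  have hR0 : 0 ≤ R := Complex.abs.nonneg ω
  have hX2 : X^2 ≤ 1 := by nlinarith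
  have hY2 : Y^2 ≤ 1 := by nlinarith
  have hR2 : R^2 ≤ 1 := by nlinarith
  have hXY : X*Y ≤ 1 := by nlinarith
  have hA : (0:ℝ) ≤ 1 - X^2*Y^2 := by
    nlinarith [mul_le_mul_of_nonneg_right hX2 (sq_nonneg Y)]
  have h1 : (0:ℝ) ≤ 2*(1-X^2*Y^2)*(1-R)^2 :=
    mul_nonneg (by linarith) (sq_nonneg _)
  have h2 : (0:ℝ) ≤ (1-R^2)*((1-X^2)*(1-Y^2) + (1-X*Y)^2) :=
    mul_nonneg (by linarith)
      (add_nonneg (mul_nonneg (by linarith) (by linarith)) (sq_nonneg _))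
  have h3 : (0:ℝ) ≤ 4*R*((1-X)*(1-Y)*(1-X*Y)) :=
    mul_nonneg (by linarith)
      (mul_nonneg (mul_nonneg (by linarith) (by linarith)) (by linarith))
  linarith

lemma G_ineq_strict {x : ℂ × ℂ} (hx : x ∈ symBidisc) {ω : ℂ} (hω : Complex.abs ω ≤ 1) :
    Complex.abs (2*ω*x.2 - x.1) < Complex.abs (2 - ω*x.1) := by
  obtain ⟨z, w, hz, hw, rfl⟩ := hx
  rw [Complex.norm_eq_abs] at hz hw
  refine abs_lt_abs_of_normSq_lt ?_
  have h := key_core hz.le hw.le hω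
  set X := Complex.abs z with hXdef
  set Y := Complex.abs w with hYdef
  set R := Complex.abs ω with hRdef
  have hX0 : 0 ≤ X := Complex.abs.nonneg z
  have hY0 : 0 ≤ Y := Complex.abs.nonneg w
  have hR0 : 0 ≤ R := Complex.abs.nonneg ω
  have hX2 : X^2 ≤ 1 := by nlinarith
  have hY2 : Y^2 ≤ 1 := by nlinarith
  have hXY : X*Y < 1 := by nlinarith
  have hA : (0:ℝ) ≤ 1 - X^2*Y^2 := by
    nlinarith [mul_le_mul_of_nonneg_right hX2 (sq_nonneg Y)]
  have hD1 : (0:ℝ) < (1-X^2)*(1-Y^2) + (1-X*Y)^2 :=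
    add_pos_of_nonneg_of_pos (mul_nonneg (by linarith) (by linarith))
      (pow_pos (by linarith) 2)
  have hD2 : (0:ℝ) < (1-X)*(1-Y)*(1-X*Y) :=
    mul_pos (mul_pos (by linarith) (by linarith)) (by linarith)
  have h1 : (0:ℝ) ≤ 2*(1-X^2*Y^2)*(1-R)^2 :=
    mul_nonneg (by linarith) (sq_nonneg _)
  have hpos : (0:ℝ) < 2*(1-X^2*Y^2)*(1-R)^2 + (1-R^2)*((1-X^2)*(1-Y^2)+(1-X*Y)^2)
      + 4*R*((1-X)*(1-Y)*(1-X*Y)) := by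
    by_cases hR1 : R < 1
    · have t2 : (0:ℝ) < (1-R^2)*((1-X^2)*(1-Y^2)+(1-X*Y)^2) :=
        mul_pos (by nlinarith) hD1
      have t3 : (0:ℝ) ≤ 4*R*((1-X)*(1-Y)*(1-X*Y)) :=
        mul_nonneg (by linarith) hD2.le
      linarith
    · have hR1' : R = 1 := le_antisymm hω (not_lt.1 hR1)
      rw [hR1']
      have t3 : (0:ℝ) < 4*1*((1-X)*(1-Y)*(1-X*Y)) := by
        rw [mul_one]; exact mul_pos (by norm_num) hD2
      have t2 : (0:ℝ) ≤ ((1:ℝ)-1^2)*((1-X^2)*(1-Y^2)+(1-X*Y)^2) := by norm_num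
      nlinarith [sq_nonneg ((1:ℝ)-1)]
  linarith

lemma gamma_abs_fst {x : ℂ × ℂ} (hx : x ∈ symBidiscCl) : Complex.abs x.1 ≤ 2 := by
  obtain ⟨z, w, hz, hw, rfl⟩ := hx
  rw [Complex.norm_eq_abs] at hz hw
  calc Complex.abs (z+w) ≤ Complex.abs z + Complex.abs w := Complex.abs.add_le z w
  _ ≤ 2 := by linarith

lemma G_abs_fst_lt {x : ℂ × ℂ} (hx : x ∈ symBidisc) : Complex.abs x.1 < 2 := by
  obtain ⟨z, w, hz, hw, rfl⟩ := hx
  rw [Complex.norm_eq_abs] at hz hw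
  calc Complex.abs (z+w) ≤ Complex.abs z + Complex.abs w := Complex.abs.add_le z w
  _ < 2 := by linarith

noncomputable def blFun {d : ℕ} (c : ℂ) (a : Fin d → ℂ) : ℂ → ℂ :=
  fun l => c * ∏ i, (l - a i) / (1 - (starRingEnd ℂ) (a i) * l)

noncomputable def blNumF {d : ℕ} (c : ℂ) (a : Fin d → ℂ) : ℂ → ℂ :=
  fun l => c * ∏ i, (l - a i)

noncomputable def blDenF {d : ℕ} (a : Fin d → ℂ) : ℂ → ℂ :=
  fun l => ∏ i, (1 - (starRingEnd ℂ) (a i) * l)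

lemma factor_den_ne {a l : ℂ} (ha : Complex.abs a < 1) (hl : Complex.abs l ≤ 1) :
    1 - (starRingEnd ℂ) a * l ≠ 0 := by
  intro h
  have h1 : (starRingEnd ℂ) a * l = 1 := by linear_combination -h
  have : Complex.abs ((starRingEnd ℂ) a * l) < 1 := by
    rw [map_mul, Complex.abs_conj]
    calc Complex.abs a * Complex.abs l ≤ Complex.abs a * 1 :=
      mul_le_mul_of_nonneg_left hl (Complex.abs.nonneg a)
    _ < 1 := by rwa [mul_one]
  rw [h1, map_one] at this
  exact absurd this (lt_irrefl 1)

lemma factor_abs_le {a l : ℂ} (ha : Complex.abs a < 1) (hl : Complex.abs l ≤ 1) :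
    Complex.abs (l - a) ≤ Complex.abs (1 - (starRingEnd ℂ) a * l) := by
  have h := normSq_factor_identity a l
  have h1 : normSq a ≤ 1 := by rw [← Complex.sq_abs]; nlinarith [Complex.abs.nonneg a]
  have h2 : normSq l ≤ 1 := by rw [← Complex.sq_abs]; nlinarith [Complex.abs.nonneg l]
  refine abs_le_abs_of_normSq_le ?_
  nlinarith [normSq_nonneg a, normSq_nonneg l]

lemma factor_abs_lt {a l : ℂ} (ha : Complex.abs a < 1) (hl : Complex.abs l < 1) :
    Complex.abs (l - a) < Complex.abs (1 - (starRingEnd ℂ) a * l) := by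
  have h := normSq_factor_identity a l
  have h1 : normSq a < 1 := by rw [← Complex.sq_abs]; nlinarith [Complex.abs.nonneg a]
  have h2 : normSq l < 1 := by rw [← Complex.sq_abs]; nlinarith [Complex.abs.nonneg l]
  refine abs_lt_abs_of_normSq_lt ?_
  nlinarith

lemma factor_abs_ge {a l : ℂ} (ha : Complex.abs a < 1) (hl : 1 ≤ Complex.abs l) :
    Complex.abs (1 - (starRingEnd ℂ) a * l) ≤ Complex.abs (l - a) := by
  have h := normSq_factor_identity a l
  have h2 : 1 ≤ normSq l := by rw [← Complex.sq_abs]; nlinarith [Complex.abs.nonneg l]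
  have h1 : normSq a ≤ 1 := by rw [← Complex.sq_abs]; nlinarith [Complex.abs.nonneg a]
  refine abs_le_abs_of_normSq_le ?_
  nlinarith [normSq_nonneg a]

lemma blDenF_ne_zero {d : ℕ} {a : Fin d → ℂ} (ha : ∀ i, Complex.abs (a i) < 1) {l : ℂ}
    (hl : Complex.abs l ≤ 1) : blDenF a l ≠ 0 :=
  Finset.prod_ne_zero_iff.mpr fun i _ => factor_den_ne (ha i) hl

lemma blFun_eq_div {d : ℕ} (c : ℂ) (a : Fin d → ℂ) (l : ℂ) :
    blFun c a l = blNumF c a l / blDenF a l := by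
  rw [blFun, blNumF, blDenF, Finset.prod_div_distrib, mul_div_assoc]

lemma blFun_abs_le {d : ℕ} {c : ℂ} {a : Fin d → ℂ} (hc : Complex.abs c = 1)
    (ha : ∀ i, Complex.abs (a i) < 1) {l : ℂ} (hl : Complex.abs l ≤ 1) :
    Complex.abs (blFun c a l) ≤ 1 := by
  rw [blFun, map_mul, hc, one_mul, map_prod]
  refine Finset.prod_le_one (fun i _ => Complex.abs.nonneg _) (fun i _ => ?_)
  rw [map_div₀]
  exact div_le_one_of_le₀ (factor_abs_le (ha i) hl) (Complex.abs.nonneg _)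

lemma blFun_abs_lt {d : ℕ} {c : ℂ} {a : Fin (d+1) → ℂ} (hc : Complex.abs c = 1)
    (ha : ∀ i, Complex.abs (a i) < 1) {l : ℂ} (hl : Complex.abs l < 1) :
    Complex.abs (blFun c a l) < 1 := by
  rw [blFun, map_mul, hc, one_mul, map_prod]
  have hlt : Complex.abs ((l - a 0) / (1 - (starRingEnd ℂ) (a 0) * l)) < 1 := by
    rw [map_div₀]
    rw [div_lt_one (by
      have := factor_den_ne (ha 0) hl.le
      exact (Complex.abs.pos_iff).mpr this)]
    exact factor_abs_lt (ha 0) hl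
  calc (∏ i, Complex.abs ((l - a i) / (1 - (starRingEnd ℂ) (a i) * l)))
      = Complex.abs ((l - a 0) / (1 - (starRingEnd ℂ) (a 0) * l)) *
        ∏ i ∈ Finset.univ.erase 0, Complex.abs ((l - a i) / (1 - (starRingEnd ℂ) (a i) * l)) :=
        (Finset.mul_prod_erase _ _ (Finset.mem_univ 0)).symm
  _ ≤ Complex.abs ((l - a 0) / (1 - (starRingEnd ℂ) (a 0) * l)) * 1 := by
        refine mul_le_mul_of_nonneg_left ?_ (Complex.abs.nonneg _)
        refine Finset.prod_le_one (fun i _ => Complex.abs.nonneg _) (fun i _ => ?_)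
        rw [map_div₀]
        exact div_le_one_of_le₀ (factor_abs_le (ha i) hl.le) (Complex.abs.nonneg _)
  _ < 1 := by rwa [mul_one]

lemma blFun_differentiableOn {d : ℕ} (c : ℂ) {a : Fin d → ℂ} (ha : ∀ i, Complex.abs (a i) < 1) :
    DifferentiableOn ℂ (blFun c a) (ball 0 1) := by
  refine DifferentiableOn.const_mul ?_ c
  refine DifferentiableOn.fun_finsetProd (fun i _ => ?_)
  refine DifferentiableOn.div (by fun_prop) (by fun_prop) ?_
  intro l hl
  exact factor_den_ne (ha i) (by simpa [Complex.norm_eq_abs] using (mem_ball_zero_iff.mp hl).le)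

-- abs equality at boundary point 1
lemma blFun_abs_one {d : ℕ} {c : ℂ} {a : Fin d → ℂ} (hc : Complex.abs c = 1) :
    Complex.abs (blNumF c a 1) = Complex.abs (blDenF a 1) := by
  rw [blNumF, blDenF, map_mul, hc, one_mul, map_prod, map_prod]
  refine Finset.prod_congr rfl (fun i _ => ?_)
  rw [mul_one]
  rw [show (1 : ℂ) - (starRingEnd ℂ) (a i) = (starRingEnd ℂ) (1 - a i) by rw [map_sub, map_one]]
  rw [Complex.abs_conj]

noncomputable def mobiusT (w ζ : ℂ) : ℂ := (ζ - w) / (1 - (starRingEnd ℂ) w * ζ)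

lemma mobius_abs_le {w ζ : ℂ} (hw : Complex.abs w < 1) (hζ : Complex.abs ζ ≤ 1) :
    Complex.abs (mobiusT w ζ) ≤ 1 := by
  rw [mobiusT, map_div₀]
  exact div_le_one_of_le₀ (factor_abs_le hw hζ) (Complex.abs.nonneg _)

lemma mobius_inj {w ζ₁ ζ₂ : ℂ} (hw : Complex.abs w < 1) (h₁ : Complex.abs ζ₁ ≤ 1)
    (h₂ : Complex.abs ζ₂ ≤ 1) (h : mobiusT w ζ₁ = mobiusT w ζ₂) : ζ₁ = ζ₂ := by
  have d₁ : 1 - (starRingEnd ℂ) w * ζ₁ ≠ 0 := factor_den_ne hw h₁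
  have d₂ : 1 - (starRingEnd ℂ) w * ζ₂ ≠ 0 := factor_den_ne hw h₂
  rw [mobiusT, mobiusT, div_eq_div_iff d₁ d₂] at h
  have hw1 : w * (starRingEnd ℂ) w = (normSq w : ℂ) := Complex.mul_conj w
  have hns : (normSq w : ℂ) ≠ 1 := by
    intro hcon
    have : normSq w = 1 := by exact_mod_cast hcon
    rw [← Complex.sq_abs] at this
    nlinarith [Complex.abs.nonneg w]
  have key : (ζ₁ - ζ₂) * (1 - (normSq w : ℂ)) = 0 := by linear_combination h + (ζ₁ - ζ₂) * hw1
  rcases mul_eq_zero.mp key with h' | h'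
  · linear_combination h'
  · exact absurd (by linear_combination -h') hns

lemma eq_const_of_max {R : ℝ} {g : ℂ → ℂ} (hg : DifferentiableOn ℂ g (ball 0 R))
    {C : ℝ} (hb : ∀ l ∈ ball (0:ℂ) R, Complex.abs (g l) ≤ C) {l₀ : ℂ}
    (h₀ : l₀ ∈ ball (0:ℂ) R) (hC : Complex.abs (g l₀) = C) :
    EqOn g (Function.const ℂ (g l₀)) (ball 0 R) := by
  refine Complex.eqOn_of_isPreconnected_of_isMaxOn_norm
    (convex_ball (0:ℂ) R).isPreconnected isOpen_ball hg h₀ ?_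
  intro l hl
  simp only [Function.comp_apply, Complex.norm_eq_abs]
  rw [hC] at *
  exact hb l hl

lemma dslope_recon (g : ℂ → ℂ) (μ l : ℂ) (h0 : g μ = 0) :
    g l = (l - μ) * dslope g μ l := by
  have := sub_smul_dslope g μ l
  rw [smul_eq_mul] at this
  rw [this, h0, sub_zero]

lemma schur_div {g : ℂ → ℂ} (hg : DifferentiableOn ℂ g (ball 0 1))
    (hb : ∀ l ∈ ball (0:ℂ) 1, Complex.abs (g l) ≤ 1) {μ : ℂ} (hμ : μ ∈ ball (0:ℂ) 1)
    (h0 : g μ = 0) :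
    DifferentiableOn ℂ (fun l => dslope g μ l * (1 - (starRingEnd ℂ) μ * l)) (ball 0 1) ∧
    ∀ l ∈ ball (0:ℂ) 1, Complex.abs (dslope g μ l * (1 - (starRingEnd ℂ) μ * l)) ≤ 1 := by
  have hμ' : Complex.abs μ < 1 := by simpa [Complex.norm_eq_abs] using mem_ball_zero_iff.mp hμ
  have hdiff : DifferentiableOn ℂ (fun l => dslope g μ l * (1 - (starRingEnd ℂ) μ * l))
      (ball 0 1) := by
    refine DifferentiableOn.mul ?_ (by fun_prop)
    exact (differentiableOn_dslope (isOpen_ball.mem_nhds hμ)).mpr hg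
  refine ⟨hdiff, ?_⟩
  intro ξ hξ
  set h : ℂ → ℂ := fun l => dslope g μ l * (1 - (starRingEnd ℂ) μ * l) with hh
  set a : ℝ := Complex.abs μ with ha
  set t : ℝ := Complex.abs ξ with ht
  have ha0 : 0 ≤ a := Complex.abs.nonneg μ
  have ht' : t < 1 := by simpa [Complex.norm_eq_abs] using mem_ball_zero_iff.mp hξ
  have hmax1 : max t a < 1 := max_lt ht' hμ'
  -- main bound for each r
  have key : ∀ r ∈ Ioo (max t a) 1, Complex.abs (h ξ) ≤ (1 - a*r)/(r - a) := by
    rintro r ⟨hr1, hr2⟩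
    have hrt : t < r := lt_of_le_of_lt (le_max_left t a) hr1
    have hra : a < r := lt_of_le_of_lt (le_max_right t a) hr1
    have hr0 : 0 < r := lt_of_le_of_lt ha0 hra
    have hsphere : ∀ l ∈ sphere (0:ℂ) r, ‖h l‖ ≤ (1 - a*r)/(r - a) := by
      intro l hl
      have hlr : Complex.abs l = r := by simpa [Complex.norm_eq_abs] using mem_sphere_zero_iff_norm.mp hl
      have hlμ : l ≠ μ := by
        intro hcon; rw [hcon] at hlr; exact hra.ne hlr
      have hd : dslope g μ l = (g l - g μ) / (l - μ) := by
        rw [dslope_of_ne g hlμ, slope_def_field]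
      have habs : Complex.abs (h l) = Complex.abs (g l) * Complex.abs (1 - (starRingEnd ℂ) μ * l)
          / Complex.abs (l - μ) := by
        rw [hh]
        simp only []
        rw [hd, h0, sub_zero, map_mul, map_div₀]
        ring
      have hgl : Complex.abs (g l) ≤ 1 := hb l (by
        rw [mem_ball_zero_iff, Complex.norm_eq_abs, hlr]; exact hr2)
      -- sharp circle bound : abs (1 - conj μ l) / abs (l - μ) ≤ (1-a r)/(r-a)
      have hsq : normSq (1 - (starRingEnd ℂ) μ * l) * (r-a)^2
          ≤ (1-a*r)^2 * normSq (l - μ) := by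
        have hx : ((starRingEnd ℂ) μ * l).re ≤ a * r := by
          have := Complex.re_le_abs ((starRingEnd ℂ) μ * l)
          rwa [map_mul, Complex.abs_conj, ← ha, hlr] at this
        have e1 : normSq (1 - (starRingEnd ℂ) μ * l)
            = 1 - 2*((starRingEnd ℂ) μ * l).re + a^2 * r^2 := by
          have expand : normSq (1 - (starRingEnd ℂ) μ * l)
              = 1 - 2*((starRingEnd ℂ) μ * l).re + normSq μ * normSq l := by
            simp only [normSq_apply, sub_re, sub_im, one_re, one_im, mul_re, mul_im,
              conj_re, conj_im]
            ring
          rw [expand, show normSq μ = a^2 from (Complex.sq_abs μ).symm,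
            show normSq l = r^2 by rw [← Complex.sq_abs l, hlr]]
        have e2 : normSq (l - μ) = r^2 - 2*((starRingEnd ℂ) μ * l).re + a^2 := by
          have expand : normSq (l - μ)
              = normSq l - 2*((starRingEnd ℂ) μ * l).re + normSq μ := by
            simp only [normSq_apply, sub_re, sub_im, mul_re, mul_im, conj_re, conj_im]
            ring
          rw [expand, show normSq μ = a^2 from (Complex.sq_abs μ).symm,
            show normSq l = r^2 by rw [← Complex.sq_abs l, hlr]]
        rw [e1, e2]
        have ha1 : a < 1 := hμ'
        nlinarith [sq_nonneg (1-r), sq_nonneg (1-a), mul_nonneg (sub_nonneg.mpr hx)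
          (mul_nonneg (mul_nonneg (sub_nonneg.mpr hr2.le) (by linarith : (0:ℝ) ≤ 1 + r))
            (mul_nonneg (sub_nonneg.mpr ha1.le) (by linarith : (0:ℝ) ≤ 1 + a)))]
      have habs2 : Complex.abs (1 - (starRingEnd ℂ) μ * l) * (r - a)
          ≤ (1 - a*r) * Complex.abs (l - μ) := by
        have h1 : (0:ℝ) ≤ 1 - a*r := by nlinarith
        have h2 : (0:ℝ) < r - a := by linarith
        have lsq : (Complex.abs (1 - (starRingEnd ℂ) μ * l) * (r - a))^2
            ≤ ((1 - a*r) * Complex.abs (l - μ))^2 := by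
          rw [mul_pow, mul_pow, Complex.sq_abs, Complex.sq_abs]
          exact hsq
        have lnn : (0:ℝ) ≤ Complex.abs (1 - (starRingEnd ℂ) μ * l) * (r - a) :=
          mul_nonneg (Complex.abs.nonneg _) h2.le
        have rnn : (0:ℝ) ≤ (1 - a*r) * Complex.abs (l - μ) :=
          mul_nonneg h1 (Complex.abs.nonneg _)
        nlinarith
      rw [Complex.norm_eq_abs, habs]
      rw [div_le_div_iff₀ (by
          rw [Complex.abs.pos_iff]
          intro hcon
          apply hlμ
          exact sub_eq_zero.mp hcon) (by linarith)]
      calc Complex.abs (g l) * Complex.abs (1 - (starRingEnd ℂ) μ * l) * (r - a)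
          ≤ 1 * (Complex.abs (1 - (starRingEnd ℂ) μ * l) * (r - a)) := by
            rw [mul_assoc]
            exact mul_le_mul_of_nonneg_right hgl
              (mul_nonneg (Complex.abs.nonneg _) (by linarith))
        _ = Complex.abs (1 - (starRingEnd ℂ) μ * l) * (r - a) := one_mul _
        _ ≤ (1 - a*r) * Complex.abs (l - μ) := habs2
    -- maximum principle on ball 0 r
    have hsub : closedBall (0:ℂ) r ⊆ ball 0 1 := by
      intro u hu
      rw [mem_closedBall_zero_iff] at hu
      rw [mem_ball_zero_iff]
      exact lt_of_le_of_lt hu hr2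
    have hdc : DiffContOnCl ℂ h (ball 0 r) := by
      refine DifferentiableOn.diffContOnCl ?_
      rw [closure_ball (0:ℂ) (ne_of_gt hr0)]
      exact hdiff.mono hsub
    have := Complex.norm_le_of_forall_mem_frontier_norm_le (isBounded_ball) hdc
      (fun u hu => by
        rw [frontier_ball (0:ℂ) (ne_of_gt hr0)] at hu
        exact hsphere u hu)
      (by
        rw [closure_ball (0:ℂ) (ne_of_gt hr0), mem_closedBall_zero_iff, Complex.norm_eq_abs, ← ht]
        exact hrt.le)
    rwa [Complex.norm_eq_abs] at this
  -- limit as r → 1⁻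
  have htend : Filter.Tendsto (fun r : ℝ => (1 - a*r)/(r - a)) (nhdsWithin 1 (Iio 1))
      (nhds 1) := by
    have hca : ContinuousAt (fun r : ℝ => (1 - a*r)/(r - a)) 1 := by
      apply ContinuousAt.div (by fun_prop) (by fun_prop)
      show (1:ℝ) - a ≠ 0
      intro hcon
      have : a = 1 := by linarith
      rw [this] at hμ'
      exact absurd hμ' (lt_irrefl 1)
    have htmp : Filter.Tendsto (fun r : ℝ => (1 - a*r)/(r - a)) (nhdsWithin 1 (Iio 1))
        (nhds ((1 - a*1)/((1:ℝ) - a))) := hca.tendsto.mono_left nhdsWithin_le_nhds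
    have h1 : (1 - a*1)/((1:ℝ) - a) = 1 := by
      rw [mul_one, div_self (by intro hcon; nlinarith)]
    rwa [h1] at htmp
  refine ge_of_tendsto htend ?_
  filter_upwards [Ioo_mem_nhdsLT_of_mem (⟨hmax1, le_refl 1⟩ : (1:ℝ) ∈ Ioc (max t a) 1)]
    with r hr using key r hr

lemma blaschke_mobius_step {d : ℕ} {c : ℂ} {a : Fin (d+1) → ℂ}
    (hc : Complex.abs c = 1) (ha : ∀ i, Complex.abs (a i) < 1)
    {μ : ℂ} (hμ : Complex.abs μ < 1) :
    ∃ (c₁ : ℂ) (a₁ : Fin d → ℂ), Complex.abs c₁ = 1 ∧ (∀ i, Complex.abs (a₁ i) < 1) ∧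
      ∀ l, Complex.abs l ≤ 1 →
        mobiusT (blFun c a μ) (blFun c a l)
          = ((l - μ) / (1 - (starRingEnd ℂ) μ * l)) * blFun c₁ a₁ l := by
  classical
  set w := blFun c a μ with hwdef
  have hw : Complex.abs w < 1 := blFun_abs_lt hc ha hμ
  have hc0 : c ≠ 0 := by
    intro h; rw [h] at hc; simp at hc
  have hcc : c * (starRingEnd ℂ) c = 1 := by
    rw [Complex.mul_conj]
    norm_cast
    rw [← Complex.sq_abs, hc]; norm_num
  -- polynomials
  set N : Polynomial ℂ := Polynomial.C c * ∏ i, (Polynomial.X - Polynomial.C (a i)) with hN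
  set Dp : Polynomial ℂ :=
    ∏ i : Fin (d+1), (Polynomial.C 1 - Polynomial.C ((starRingEnd ℂ) (a i)) * Polynomial.X)
    with hDp
  have hNeval : ∀ l, N.eval l = c * ∏ i, (l - a i) := by
    intro l; simp [hN, eval_prod]
  have hDeval : ∀ l, Dp.eval l = ∏ i, (1 - (starRingEnd ℂ) (a i) * l) := by
    intro l; simp [hDp, eval_prod]
  have hDne : ∀ {l : ℂ}, Complex.abs l ≤ 1 → Dp.eval l ≠ 0 := by
    intro l hl
    rw [hDeval]
    exact Finset.prod_ne_zero_iff.mpr fun i _ => factor_den_ne (ha i) hl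
  have hqN : ∀ {l : ℂ}, Complex.abs l ≤ 1 → blFun c a l = N.eval l / Dp.eval l := by
    intro l hl
    rw [blFun, hNeval, hDeval, Finset.prod_div_distrib, mul_div_assoc]
  set P : Polynomial ℂ := N - Polynomial.C w * Dp with hP
  have hPeval : ∀ l, P.eval l = N.eval l - w * Dp.eval l := by
    intro l; simp [hP]
  have hPμ : P.eval μ = 0 := by
    rw [hPeval, hwdef, hqN hμ.le, div_mul_cancel₀ _ (hDne hμ.le), sub_self]
  have habs1 : Complex.abs (N.eval 1) = Complex.abs (Dp.eval 1) := by
    rw [hNeval, hDeval, map_mul, hc, one_mul, map_prod, map_prod]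
    refine Finset.prod_congr rfl (fun i _ => ?_)
    rw [mul_one, show (1:ℂ) - (starRingEnd ℂ) (a i) = (starRingEnd ℂ) (1 - a i) by
      rw [map_sub, map_one], Complex.abs_conj]
  have hP0 : P ≠ 0 := by
    intro h
    have e := hPeval 1
    rw [h, eval_zero] at e
    have h1 : N.eval 1 = w * Dp.eval 1 := by linear_combination -e
    have h2 : Complex.abs (N.eval 1) = Complex.abs w * Complex.abs (Dp.eval 1) := by
      rw [h1, map_mul]
    rw [habs1] at h2
    have hpos : 0 < Complex.abs (Dp.eval 1) :=
      Complex.abs.pos (hDne (by simp))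
    nlinarith
  set κ : ℂ := P.leadingCoeff with hκ
  have hκ0 : κ ≠ 0 := leadingCoeff_ne_zero.mpr hP0
  have hsplits : Splits P := IsAlgClosed.splits P
  have hcard : Multiset.card P.roots = P.natDegree := (splits_iff_card_roots).mp hsplits
  have hfact : P = Polynomial.C κ * (P.roots.map (fun β => Polynomial.X - Polynomial.C β)).prod :=
    hsplits.eq_prod_roots
  have hPevalfact : ∀ l, P.eval l = κ * (P.roots.map (fun β => l - β)).prod := by
    intro l
    conv_lhs => rw [hfact]
    rw [eval_mul, eval_C, eval_multiset_prod, Multiset.map_map]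
    congr 1
    refine congrArg _ (Multiset.map_congr rfl ?_)
    intro β _
    simp
  have hroots : ∀ β ∈ P.roots, Complex.abs β < 1 := by
    intro β hβ
    have hroot : P.eval β = 0 := (mem_roots hP0).mp hβ
    by_contra hout
    push_neg at hout
    have e := hPeval β
    have hND : N.eval β = w * Dp.eval β := by
      rw [hroot] at e; linear_combination -e
    by_cases hD0 : Dp.eval β = 0
    · rw [hD0, mul_zero, hNeval] at hND
      rcases mul_eq_zero.mp hND with h' | h'
      · exact hc0 h'
      · obtain ⟨i, _, hi⟩ := Finset.prod_eq_zero_iff.mp h'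
        have hβa : β = a i := by linear_combination hi
        rw [hβa] at hout
        exact absurd (ha i) (not_lt.mpr hout)
    · have hge : Complex.abs (Dp.eval β) ≤ Complex.abs (N.eval β) := by
        rw [hNeval, hDeval, map_mul, hc, one_mul, map_prod, map_prod]
        exact Finset.prod_le_prod (fun i _ => Complex.abs.nonneg _)
          (fun i _ => factor_abs_ge (ha i) hout)
      rw [hND, map_mul] at hge
      have hpos : 0 < Complex.abs (Dp.eval β) := Complex.abs.pos hD0
      nlinarith
  -- degree bounds
  have hdegN : N.natDegree ≤ d+1 := by
    refine le_trans (natDegree_C_mul_le _ _) (le_trans (natDegree_prod_le _ _) ?_)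
    have : ∀ i : Fin (d+1), (Polynomial.X - Polynomial.C (a i)).natDegree = 1 := fun i =>
      natDegree_X_sub_C (a i)
    simp [this]
  have hdegD : Dp.natDegree ≤ d+1 := by
    refine le_trans (natDegree_prod_le _ _) ?_
    have hfac : ∀ i : Fin (d+1),
        (Polynomial.C (1:ℂ) - Polynomial.C ((starRingEnd ℂ) (a i)) * Polynomial.X).natDegree ≤ 1 := by
      intro i
      refine le_trans (natDegree_sub_le _ _) (sup_le (by simp) ?_)
      exact le_trans (natDegree_C_mul_le _ _) (by simp)
    have hsum : ∑ i : Fin (d+1),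
        (Polynomial.C (1:ℂ) - Polynomial.C ((starRingEnd ℂ) (a i)) * Polynomial.X).natDegree
        ≤ ∑ _i : Fin (d+1), 1 :=
      Finset.sum_le_sum (fun i _ => hfac i)
    simpa using hsum
  have hdegP : P.natDegree ≤ d+1 :=
    le_trans (natDegree_sub_le _ _) (sup_le hdegN (le_trans (natDegree_C_mul_le _ _) hdegD))
  have he : Multiset.card P.roots ≤ d+1 := hcard ▸ hdegP
  -- reflection identity
  set Pd : Polynomial ℂ := Dp - Polynomial.C ((starRingEnd ℂ) w) * N with hPdDef
  set Q1 : Polynomial ℂ := Polynomial.C ((starRingEnd ℂ) c) * Pd with hQ1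
  set Q2 : Polynomial ℂ := Polynomial.C ((starRingEnd ℂ) κ)
      * Polynomial.X^(d+1-Multiset.card P.roots)
      * (P.roots.map (fun β => Polynomial.C 1 - Polynomial.C ((starRingEnd ℂ) β) * Polynomial.X)).prod
    with hQ2
  have hQeval2 : ∀ l, Q2.eval l = (starRingEnd ℂ) κ * l^(d+1-Multiset.card P.roots)
      * (P.roots.map (fun β => 1 - (starRingEnd ℂ) β * l)).prod := by
    intro l
    rw [hQ2, eval_mul, eval_mul, eval_C, eval_pow, eval_X, eval_multiset_prod, Multiset.map_map]
    congr 1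
    refine congrArg _ (Multiset.map_congr rfl ?_)
    intro β _
    simp
  have hQeq : Q1 = Q2 := by
    apply eq_of_infinite_eval_eq
    have hsub : {(0:ℂ)}ᶜ ⊆ {x | Q1.eval x = Q2.eval x} := by
      intro l hl
      have hl0 : l ≠ 0 := hl
      -- u = (conj l)⁻¹
      set u : ℂ := ((starRingEnd ℂ) l)⁻¹ with hu
      have hconju : (starRingEnd ℂ) u = l⁻¹ := by
        rw [hu, map_inv₀, Complex.conj_conj]
      have hlpow : ∀ m : ℕ, (l:ℂ)^m = ∏ _i : Fin m, l := by
        intro m; simp [Finset.prod_const, Finset.card_univ]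
      -- A: l^(d+1) * conj (N.eval u) = conj c * Dp.eval l
      have hA : l^(d+1) * (starRingEnd ℂ) (N.eval u) = (starRingEnd ℂ) c * Dp.eval l := by
        have hcomb : (∏ _i : Fin (d+1), l) * (∏ i, (starRingEnd ℂ) (u - a i))
            = ∏ i, (l * (starRingEnd ℂ) (u - a i)) := (Finset.prod_mul_distrib).symm
        have hfac : ∀ i : Fin (d+1),
            l * (starRingEnd ℂ) (u - a i) = 1 - (starRingEnd ℂ) (a i) * l := by
          intro i
          rw [map_sub, hconju]
          field_simp
        calc l^(d+1) * (starRingEnd ℂ) (N.eval u)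
            = (starRingEnd ℂ) c * ((∏ _i : Fin (d+1), l) * ∏ i, (starRingEnd ℂ) (u - a i)) := by
              rw [hNeval u, map_mul, map_prod, hlpow (d+1)]; ring
          _ = (starRingEnd ℂ) c * ∏ i, (l * (starRingEnd ℂ) (u - a i)) := by rw [hcomb]
          _ = (starRingEnd ℂ) c * ∏ i, (1 - (starRingEnd ℂ) (a i) * l) := by
              rw [Finset.prod_congr rfl (fun i _ => hfac i)]
          _ = (starRingEnd ℂ) c * Dp.eval l := by rw [hDeval]
      -- B: l^(d+1) * conj (Dp.eval u) = conj c * N.eval l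
      have hB : l^(d+1) * (starRingEnd ℂ) (Dp.eval u) = (starRingEnd ℂ) c * N.eval l := by
        have hcomb : (∏ _i : Fin (d+1), l)
              * (∏ i, (starRingEnd ℂ) (1 - (starRingEnd ℂ) (a i) * u))
            = ∏ i, (l * (starRingEnd ℂ) (1 - (starRingEnd ℂ) (a i) * u)) :=
          (Finset.prod_mul_distrib).symm
        have hfac : ∀ i : Fin (d+1),
            l * (starRingEnd ℂ) (1 - (starRingEnd ℂ) (a i) * u) = l - a i := by
          intro i
          rw [map_sub, map_one, map_mul, Complex.conj_conj, hconju]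
          field_simp
        calc l^(d+1) * (starRingEnd ℂ) (Dp.eval u)
            = (∏ _i : Fin (d+1), l)
                * ∏ i, (starRingEnd ℂ) (1 - (starRingEnd ℂ) (a i) * u) := by
              rw [hDeval u, map_prod, hlpow (d+1)]
          _ = ∏ i, (l * (starRingEnd ℂ) (1 - (starRingEnd ℂ) (a i) * u)) := hcomb
          _ = ∏ i, (l - a i) := Finset.prod_congr rfl (fun i _ => hfac i)
          _ = (starRingEnd ℂ) c * N.eval l := by
              rw [hNeval l]
              linear_combination (-(∏ i : Fin (d+1), (l - a i))) * hcc
      have hPdeval : ∀ x : ℂ, Pd.eval x = Dp.eval x - (starRingEnd ℂ) w * N.eval x := by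
        intro x; rw [hPdDef]; simp
      have hQ1eval : Q1.eval l = (starRingEnd ℂ) c * Pd.eval l := by
        rw [hQ1]; simp
      -- LHS route
      have hL : l^(d+1) * (starRingEnd ℂ) (P.eval u) = Q1.eval l := by
        rw [hQ1eval, hPdeval, hPeval, map_sub, map_mul]
        calc l^(d+1) * ((starRingEnd ℂ) (N.eval u)
              - (starRingEnd ℂ) w * (starRingEnd ℂ) (Dp.eval u))
            = l^(d+1) * (starRingEnd ℂ) (N.eval u)
              - (starRingEnd ℂ) w * (l^(d+1) * (starRingEnd ℂ) (Dp.eval u)) := by ring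
          _ = (starRingEnd ℂ) c * Dp.eval l
              - (starRingEnd ℂ) w * ((starRingEnd ℂ) c * N.eval l) := by rw [hA, hB]
          _ = (starRingEnd ℂ) c * (Dp.eval l - (starRingEnd ℂ) w * N.eval l) := by ring
      -- RHS route
      have hR : l^(d+1) * (starRingEnd ℂ) (P.eval u) = Q2.eval l := by
        have h1 : (starRingEnd ℂ) (P.eval u)
            = (starRingEnd ℂ) κ * (P.roots.map (fun β => l⁻¹ - (starRingEnd ℂ) β)).prod := by
          rw [hPevalfact u, map_mul, map_multiset_prod, Multiset.map_map]
          congr 1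
          refine congrArg _ (Multiset.map_congr rfl ?_)
          intro β _
          simp only [Function.comp_apply, map_sub, hconju]
        have h2 : l^(Multiset.card P.roots)
              * (P.roots.map (fun β => l⁻¹ - (starRingEnd ℂ) β)).prod
            = (P.roots.map (fun β => 1 - (starRingEnd ℂ) β * l)).prod := by
          rw [show l^(Multiset.card P.roots) = (P.roots.map (fun _ => l)).prod by
            rw [Multiset.map_const', Multiset.prod_replicate]]
          rw [← Multiset.prod_map_mul]
          refine congrArg _ (Multiset.map_congr rfl ?_)
          intro β _
          field_simp
        have h3 : l^(d+1) = l^(d+1-Multiset.card P.roots) * l^(Multiset.card P.roots) := by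
          rw [← pow_add, Nat.sub_add_cancel he]
        rw [hQeval2, h1, h3, ← h2]
        ring
      rw [Set.mem_setOf_eq, ← hL, ← hR]
    exact Set.Infinite.mono hsub ((Set.finite_singleton (0:ℂ)).infinite_compl)
  -- card roots = d+1
  have hQ10 : Q1.eval 0 ≠ 0 := by
    rw [hQ1, eval_mul, eval_C, hPdDef, eval_sub, eval_mul, eval_C]
    have hD0 : Dp.eval 0 = 1 := by
      rw [hDeval]; simp
    have hN0 : N.eval 0 = c * ∏ i, (0 - a i) := hNeval 0
    refine mul_ne_zero ?_ ?_
    · intro hcon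
      rw [show (0:ℂ) = (starRingEnd ℂ) 0 by simp] at hcon
      exact hc0 (starRingEnd ℂ |>.injective hcon)
    · intro hcon
      have habsN : Complex.abs (N.eval 0) ≤ 1 := by
        rw [hN0, map_mul, hc, one_mul, map_prod]
        refine Finset.prod_le_one (fun i _ => Complex.abs.nonneg _) (fun i _ => ?_)
        rw [zero_sub, map_neg_eq_map]
        exact (ha i).le
      have h1 : (1:ℂ) = (starRingEnd ℂ) w * N.eval 0 := by
        rw [hD0] at hcon; linear_combination hcon
      have := congrArg Complex.abs h1
      rw [map_one, map_mul, Complex.abs_conj] at this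
      nlinarith [Complex.abs.nonneg (N.eval 0), hw, habsN,
        mul_le_mul_of_nonneg_left habsN (Complex.abs.nonneg w)]
  have hed : Multiset.card P.roots = d+1 := by
    by_contra hne
    have hlt : Multiset.card P.roots < d+1 := lt_of_le_of_ne he hne
    apply hQ10
    rw [hQeq, hQeval2]
    rw [zero_pow (Nat.sub_ne_zero_of_lt hlt)]
    ring
  -- set up reduced data
  have hμR : μ ∈ P.roots := (mem_roots hP0).mpr hPμ
  set S : Multiset ℂ := P.roots.erase μ with hS
  have hcons : μ ::ₘ S = P.roots := Multiset.cons_erase hμR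
  have hScard : Multiset.card S = d := by
    rw [hS, Multiset.card_erase_of_mem hμR, hed]
    rfl
  have hSmem : ∀ β ∈ S, Complex.abs β < 1 := fun β hβ =>
    hroots β (Multiset.mem_of_mem_erase hβ)
  have hlen : S.toList.length = d := by rw [Multiset.length_toList, hScard]
  set a₁ : Fin d → ℂ := fun i => S.toList.get (Fin.cast hlen.symm i) with ha₁def
  have ha₁ : ∀ i, Complex.abs (a₁ i) < 1 := fun i =>
    hSmem _ (Multiset.mem_toList.mp (List.get_mem S.toList (Fin.cast hlen.symm i)))
  have hprodconv : ∀ f : ℂ → ℂ, (S.map f).prod = ∏ i : Fin d, f (a₁ i) := by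
    intro f
    conv_lhs => rw [← Multiset.coe_toList S]
    rw [Multiset.map_coe, Multiset.prod_coe]
    rw [show S.toList.map f = List.ofFn (f ∘ S.toList.get) by
      rw [← List.map_ofFn (f := S.toList.get) (g := f), List.ofFn_get]]
    rw [List.prod_ofFn]
    rw [← Equiv.prod_comp (finCongr hlen.symm) (fun j => (f ∘ S.toList.get) j)]
    rfl
  set c₁ : ℂ := κ / (c * (starRingEnd ℂ) κ) with hc₁def
  have hc₁ : Complex.abs c₁ = 1 := by
    rw [hc₁def, map_div₀, map_mul, hc, Complex.abs_conj, one_mul]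
    exact div_self (Complex.abs.ne_zero hκ0)
  refine ⟨c₁, a₁, hc₁, ha₁, ?_⟩
  intro l hl
  have hD_l : Dp.eval l ≠ 0 := hDne hl
  have hql : blFun c a l = N.eval l / Dp.eval l := hqN hl
  have hqabs : Complex.abs (blFun c a l) ≤ 1 := blFun_abs_le hc ha hl
  have hden2 : 1 - (starRingEnd ℂ) w * blFun c a l ≠ 0 := factor_den_ne hw hqabs
  have hPd_eval : Pd.eval l = Dp.eval l * (1 - (starRingEnd ℂ) w * blFun c a l) := by
    rw [hPdDef, eval_sub, eval_mul, eval_C, hql]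
    field_simp [hD_l]
    try ring
  have hPd_ne : Pd.eval l ≠ 0 := by
    rw [hPd_eval]; exact mul_ne_zero hD_l hden2
  have hmob : mobiusT w (blFun c a l) = P.eval l / Pd.eval l := by
    rw [mobiusT]
    have h1 : blFun c a l - w = P.eval l / Dp.eval l := by
      rw [hql, hPeval, eq_div_iff hD_l, sub_mul, div_mul_cancel₀ _ hD_l]
    have h2 : 1 - (starRingEnd ℂ) w * blFun c a l = Pd.eval l / Dp.eval l := by
      rw [hPd_eval, mul_comm (Dp.eval l) _, mul_div_assoc, div_self hD_l, mul_one]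
    rw [h1, h2, div_div_div_cancel_right₀]
    exact hD_l
  -- product factorizations
  have hPfact_l : P.eval l = κ * ((l - μ) * (S.map (fun β => l - β)).prod) := by
    rw [hPevalfact l, ← hcons, Multiset.map_cons, Multiset.prod_cons]
  have hPd_fact : (starRingEnd ℂ) c * Pd.eval l
      = (starRingEnd ℂ) κ * ((1 - (starRingEnd ℂ) μ * l)
          * (S.map (fun β => 1 - (starRingEnd ℂ) β * l)).prod) := by
    have h := congrArg (eval l) hQeq
    rw [hQ1, eval_mul, eval_C, hQeval2, hed] at h
    rw [h, Nat.sub_self, pow_zero, ← hcons, Multiset.map_cons, Multiset.prod_cons]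
    ring
  have hSden_ne : (S.map (fun β => 1 - (starRingEnd ℂ) β * l)).prod ≠ 0 := by
    refine Multiset.prod_ne_zero ?_
    intro hmem
    rw [Multiset.mem_map] at hmem
    obtain ⟨β, hβS, hβ0⟩ := hmem
    exact factor_den_ne (hSmem β hβS) hl hβ0
  have hμden : 1 - (starRingEnd ℂ) μ * l ≠ 0 := factor_den_ne hμ hl
  have hbl₁ : blFun c₁ a₁ l = c₁ * ((S.map (fun β => l - β)).prod
      / (S.map (fun β => 1 - (starRingEnd ℂ) β * l)).prod) := by
    rw [blFun, ← Multiset.prod_map_div, hprodconv]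
  -- Pd.eval l explicitly
  have hPd_expl : Pd.eval l = c * ((starRingEnd ℂ) κ * ((1 - (starRingEnd ℂ) μ * l)
      * (S.map (fun β => 1 - (starRingEnd ℂ) β * l)).prod)) := by
    rw [← hPd_fact]
    calc Pd.eval l = (c * (starRingEnd ℂ) c) * Pd.eval l := by rw [hcc, one_mul]
      _ = c * ((starRingEnd ℂ) c * Pd.eval l) := by ring
  rw [hmob, hPfact_l, hPd_expl, hbl₁, hc₁def]
  have hκc_ne : (starRingEnd ℂ) κ ≠ 0 := by
    intro hcon
    apply hκ0
    rw [show (0:ℂ) = (starRingEnd ℂ) 0 by simp] at hcon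
    exact (starRingEnd ℂ).injective hcon
  field_simp

lemma pick_unique (d : ℕ) : ∀ (c : ℂ) (a : Fin d → ℂ), Complex.abs c = 1 →
    (∀ i, Complex.abs (a i) < 1) →
    ∀ lam : Fin (d+1) → ℂ, (∀ j, Complex.abs (lam j) < 1) → Function.Injective lam →
    ∀ g : ℂ → ℂ, DifferentiableOn ℂ g (ball 0 1) →
    (∀ l ∈ ball (0:ℂ) 1, Complex.abs (g l) ≤ 1) →
    (∀ j, g (lam j) = blFun c a (lam j)) →
    ∀ l ∈ ball (0:ℂ) 1, g l = blFun c a l := by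
  induction d with
  | zero =>
    intro c a hc ha lam hlam hinj g hg hb hint l hl
    have hbl : ∀ x : ℂ, blFun c a x = c := by
      intro x
      rw [blFun]
      simp
    have hmem : lam 0 ∈ ball (0:ℂ) 1 := by
      rw [mem_ball_zero_iff, Complex.norm_eq_abs]; exact hlam 0
    have habs : Complex.abs (g (lam 0)) = 1 := by
      rw [hint 0, hbl]; exact hc
    have := eq_const_of_max hg hb hmem habs hl
    rw [Function.const_apply] at this
    rw [this, hint 0, hbl, hbl]
  | succ d ih =>
    intro c a hc ha lam hlam hinj g hg hb hint l hl
    set μ : ℂ := lam 0 with hμdef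
    have hμ : Complex.abs μ < 1 := hlam 0
    have hμmem : μ ∈ ball (0:ℂ) 1 := by
      rw [mem_ball_zero_iff, Complex.norm_eq_abs]; exact hμ
    set w : ℂ := blFun c a μ with hwdef
    have hw : Complex.abs w < 1 := blFun_abs_lt hc ha hμ
    obtain ⟨c₁, a₁, hc₁, ha₁, hstep⟩ := blaschke_mobius_step hc ha hμ
    set G : ℂ → ℂ := fun x => mobiusT w (g x) with hGdef
    have hGdiff : DifferentiableOn ℂ G (ball 0 1) := by
      rw [hGdef]
      simp only [mobiusT]
      refine DifferentiableOn.div (hg.sub (differentiableOn_const w)) ?_ ?_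
      · exact DifferentiableOn.sub (differentiableOn_const 1)
          ((differentiableOn_const ((starRingEnd ℂ) w)).mul hg)
      · intro x hx
        exact factor_den_ne hw (hb x hx)
    have hGb : ∀ x ∈ ball (0:ℂ) 1, Complex.abs (G x) ≤ 1 := by
      intro x hx
      exact mobius_abs_le hw (hb x hx)
    have hG0 : G μ = 0 := by
      rw [hGdef]
      simp only []
      rw [hint 0, ← hμdef, ← hwdef, mobiusT, sub_self, zero_div]
    obtain ⟨hg₁diff, hg₁b⟩ := schur_div hGdiff hGb hμmem hG0
    set g₁ : ℂ → ℂ := fun x => dslope G μ x * (1 - (starRingEnd ℂ) μ * x) with hg₁def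
    -- identity: for all x in ball, G x * (1 - conj μ x) = (x - μ) * g₁ x
    have hGg₁ : ∀ x : ℂ, G x * (1 - (starRingEnd ℂ) μ * x) = (x - μ) * g₁ x := by
      intro x
      rw [hg₁def]
      have := dslope_recon G μ x hG0
      calc G x * (1 - (starRingEnd ℂ) μ * x)
          = ((x - μ) * dslope G μ x) * (1 - (starRingEnd ℂ) μ * x) := by rw [← this]
        _ = (x - μ) * (dslope G μ x * (1 - (starRingEnd ℂ) μ * x)) := by ring
    -- interpolation for g₁
    set lam' : Fin (d+1) → ℂ := fun j => lam j.succ with hlam'def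
    have hlam' : ∀ j, Complex.abs (lam' j) < 1 := fun j => hlam j.succ
    have hinj' : Function.Injective lam' :=
      Function.Injective.comp hinj (Fin.succ_injective (d+1))
    have hint' : ∀ j, g₁ (lam' j) = blFun c₁ a₁ (lam' j) := by
      intro j
      have hne : lam' j ≠ μ := by
        rw [hμdef, hlam'def]
        intro hcon
        exact absurd (hinj hcon) (Fin.succ_ne_zero j)
      have hden : 1 - (starRingEnd ℂ) μ * lam' j ≠ 0 := factor_den_ne hμ (hlam' j).le
      have hnum : lam' j - μ ≠ 0 := sub_ne_zero.mpr hne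
      have hGval : G (lam' j) = ((lam' j - μ) / (1 - (starRingEnd ℂ) μ * lam' j))
          * blFun c₁ a₁ (lam' j) := by
        rw [hGdef]
        simp only []
        rw [hint j.succ]
        exact hstep (lam' j) (hlam' j).le
      have h1 := hGg₁ (lam' j)
      rw [hGval] at h1
      have h1' : (lam' j - μ) * g₁ (lam' j) = (lam' j - μ) * blFun c₁ a₁ (lam' j) := by
        rw [← h1, div_mul_eq_mul_div, div_mul_cancel₀ _ hden]
      exact mul_left_cancel₀ hnum h1'
    have hEq := ih c₁ a₁ hc₁ ha₁ lam' hlam' hinj' g₁ hg₁diff hg₁b hint'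
    -- reconstruct on the ball
    have hgl : Complex.abs (g l) ≤ 1 := hb l hl
    have hbll : Complex.abs (blFun c a l) ≤ 1 := blFun_abs_le hc ha (by
      rw [mem_ball_zero_iff, Complex.norm_eq_abs] at hl; exact hl.le)
    refine mobius_inj hw hgl hbll ?_
    have hl' : Complex.abs l < 1 := by
      rw [mem_ball_zero_iff, Complex.norm_eq_abs] at hl; exact hl
    have hden : 1 - (starRingEnd ℂ) μ * l ≠ 0 := factor_den_ne hμ hl'.le
    have h1 := hGg₁ l
    rw [hEq l hl] at h1
    have h2 : mobiusT w (g l) = ((l - μ) / (1 - (starRingEnd ℂ) μ * l)) * blFun c₁ a₁ l := by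
      have : G l = ((l - μ) * blFun c₁ a₁ l) / (1 - (starRingEnd ℂ) μ * l) := by
        rw [eq_div_iff hden]
        exact h1
      rw [hGdef] at this
      simp only [] at this
      rw [this]
      ring
    rw [h2, ← hstep l hl'.le]

lemma blNumF_abs_le_blDenF {d : ℕ} {c : ℂ} {a : Fin d → ℂ} (hc : Complex.abs c = 1)
    (ha : ∀ i, Complex.abs (a i) < 1) {l : ℂ} (hl : Complex.abs l ≤ 1) :
    Complex.abs (blNumF c a l) ≤ Complex.abs (blDenF a l) := by
  rw [blNumF, blDenF, map_mul, hc, one_mul, map_prod, map_prod]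
  exact Finset.prod_le_prod (fun i _ => Complex.abs.nonneg _)
    (fun i _ => factor_abs_le (ha i) hl)

/-- If solvable data `λ_j ↦ z_j` (`λ_j ∈ 𝔻` distinct, `z_j ∈ G`) satisfy
condition 𝒞 extremally — i.e. there are Blaschke products `m` of degree at most `n` and
`q` of degree at most `n−1` with `Φ(m(λ_j), z_j) = q(λ_j)` for all `j` — then the data
are extremally solvable: no holomorphic `f : U → Γ` on an open neighbourhood `U` of the
closed unit disc interpolates the data. -/
theorem condC_extremal_implies_extremally_solvable
    {n : ℕ} (hn : 0 < n)
    (lam : Fin n → ℂ) (hlam : ∀ j, lam j ∈ ball (0:ℂ) 1)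
    (hinj : Function.Injective lam)
    (z : Fin n → ℂ × ℂ) (hz : ∀ j, z j ∈ symBidisc)
    (hsolv : ∃ h : ℂ → ℂ × ℂ, DifferentiableOn ℂ h (ball (0:ℂ) 1) ∧
      MapsTo h (ball (0:ℂ) 1) symBidiscCl ∧ ∀ j, h (lam j) = z j)
    (hC : ∃ m q : ℂ → ℂ, IsBlaschkeDegLE n m ∧ IsBlaschkeDegLE (n - 1) q ∧
      ∀ j, Phi (m (lam j)) (z j).1 (z j).2 = q (lam j)) :
    ¬ ∃ (U : Set ℂ) (f : ℂ → ℂ × ℂ), IsOpen U ∧ closedBall (0:ℂ) 1 ⊆ U ∧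
      DifferentiableOn ℂ f U ∧ MapsTo f U symBidiscCl ∧ ∀ j, f (lam j) = z j := by
  rintro ⟨U, f, hUopen, hUsub, hfdiff, hfmap, hfint⟩
  obtain ⟨m, q, ⟨dm, cm, am, hdm, hcm, ham, hmform⟩, ⟨dq, cq, aq, hdq, hcq, haq, hqform⟩,
    hPhi⟩ := hC
  classical
  -- a slightly larger ball inside U
  obtain ⟨δ, hδ0, hδsub⟩ :=
    (isCompact_closedBall (0:ℂ) 1).exists_cthickening_subset_open hUopen hUsub
  have hthick : cthickening δ (closedBall (0:ℂ) 1) = closedBall (0:ℂ) (δ + 1) :=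
    cthickening_closedBall hδ0.le (by norm_num) (0:ℂ)
  set R : ℝ := δ + 1 with hRdef
  have hR1 : 1 < R := by rw [hRdef]; linarith
  have hRsub : closedBall (0:ℂ) R ⊆ U := by rw [← hthick]; exact hδsub
  have hballR : ball (0:ℂ) R ⊆ U := fun x hx => hRsub (ball_subset_closedBall hx)
  have hball1R : ball (0:ℂ) 1 ⊆ ball (0:ℂ) R := ball_subset_ball (by linarith)
  have hcball1R : closedBall (0:ℂ) 1 ⊆ ball (0:ℂ) R :=
    closedBall_subset_ball hR1
  -- coordinates of f
  set f1 : ℂ → ℂ := fun x => (f x).1 with hf1def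
  set f2 : ℂ → ℂ := fun x => (f x).2 with hf2def
  have hf1diff : DifferentiableOn ℂ f1 U := hfdiff.fst
  have hf2diff : DifferentiableOn ℂ f2 U := hfdiff.snd
  have hf1abs : ∀ x ∈ U, Complex.abs (f1 x) ≤ 2 := fun x hx => gamma_abs_fst (hfmap hx)
  -- index 0
  set j₀ : Fin n := ⟨0, hn⟩ with hj₀
  have hlamball : ∀ j, lam j ∈ ball (0:ℂ) R := fun j => hball1R (hlam j)
  have hlamabs : ∀ j, Complex.abs (lam j) < 1 := by
    intro j
    have := hlam j
    rwa [mem_ball_zero_iff, Complex.norm_eq_abs] at this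
  -- no interior point of ball 0 R has |f1| = 2
  have hf1no2 : ∀ x ∈ ball (0:ℂ) R, Complex.abs (f1 x) ≠ 2 := by
    intro x hx hcon
    have hconst := eq_const_of_max (hf1diff.mono hballR)
      (fun y hy => hf1abs y (hballR hy)) hx hcon
    have h1 := hconst (hlamball j₀)
    rw [Function.const_apply] at h1
    have h2 : Complex.abs (f1 (lam j₀)) < 2 := by
      rw [hf1def]
      simp only []
      rw [hfint j₀]
      exact G_abs_fst_lt (hz j₀)
    rw [h1, hcon] at h2
    exact absurd h2 (lt_irrefl 2)
  -- numerator and denominator functions for m and q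
  set Mn : ℂ → ℂ := blNumF cm am with hMn
  set Md : ℂ → ℂ := blDenF am with hMd
  set Qn : ℂ → ℂ := blNumF cq aq with hQn
  set Qd : ℂ → ℂ := blDenF aq with hQd
  have hMndiff : Differentiable ℂ Mn := by
    rw [hMn, show blNumF cm am = fun l : ℂ => cm * ∏ i, (l - am i) from rfl]; fun_prop
  have hMddiff : Differentiable ℂ Md := by
    rw [hMd, show blDenF am = fun l : ℂ => ∏ i, (1 - (starRingEnd ℂ) (am i) * l) from rfl]
    fun_prop
  have hQndiff : Differentiable ℂ Qn := by
    rw [hQn, show blNumF cq aq = fun l : ℂ => cq * ∏ i, (l - aq i) from rfl]; fun_prop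
  have hQddiff : Differentiable ℂ Qd := by
    rw [hQd, show blDenF aq = fun l : ℂ => ∏ i, (1 - (starRingEnd ℂ) (aq i) * l) from rfl]
    fun_prop
  have hMdne : ∀ {x : ℂ}, Complex.abs x ≤ 1 → Md x ≠ 0 := fun hx => blDenF_ne_zero ham hx
  have hQdne : ∀ {x : ℂ}, Complex.abs x ≤ 1 → Qd x ≠ 0 := fun hx => blDenF_ne_zero haq hx
  have hMabs : ∀ {x : ℂ}, Complex.abs x ≤ 1 → Complex.abs (Mn x) ≤ Complex.abs (Md x) :=
    fun hx => blNumF_abs_le_blDenF hcm ham hx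
  -- psi and chi
  set ψ : ℂ → ℂ := fun x => 2 * Mn x * f2 x - Md x * f1 x with hψ
  set χ : ℂ → ℂ := fun x => 2 * Md x - Mn x * f1 x with hχ
  have hψdiff : DifferentiableOn ℂ ψ (ball 0 R) := by
    rw [hψ]
    exact (((hMndiff.differentiableOn).const_mul 2).mul (hf2diff.mono hballR)).sub
      ((hMddiff.differentiableOn).mul (hf1diff.mono hballR))
  have hχdiff : DifferentiableOn ℂ χ (ball 0 R) := by
    rw [hχ]
    exact ((hMddiff.differentiableOn).const_mul 2).sub
      ((hMndiff.differentiableOn).mul (hf1diff.mono hballR))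
  -- χ does not vanish on the closed unit ball
  have hχne : ∀ {x : ℂ}, Complex.abs x ≤ 1 → χ x ≠ 0 := by
    intro x hx hcon
    have hxU : x ∈ U := hUsub (by rwa [mem_closedBall_zero_iff, Complex.norm_eq_abs])
    have hxR : x ∈ ball (0:ℂ) R := hcball1R
      (by rwa [mem_closedBall_zero_iff, Complex.norm_eq_abs])
    have heq : 2 * Md x = Mn x * f1 x := by
      rw [hχ] at hcon
      linear_combination hcon
    have habs : 2 * Complex.abs (Md x) = Complex.abs (Mn x) * Complex.abs (f1 x) := by
      have := congrArg Complex.abs heq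
      rwa [map_mul, map_mul, Complex.abs_two] at this
    have hMdpos : 0 < Complex.abs (Md x) := Complex.abs.pos (hMdne hx)
    have hMnpos : 0 < Complex.abs (Mn x) := by
      rcases lt_or_eq_of_le (Complex.abs.nonneg (Mn x)) with h | h
      · exact h
      · exfalso; rw [← h, zero_mul] at habs; linarith
    have hf1x : Complex.abs (f1 x) = 2 := by
      have h1 : Complex.abs (f1 x) ≤ 2 := hf1abs x hxU
      have h2 := hMabs hx
      nlinarith
    exact hf1no2 x hxR hf1x
  -- the Schur function g = ψ/χ
  set g : ℂ → ℂ := fun x => ψ x / χ x with hg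
  have hgdiff : DifferentiableOn ℂ g (ball 0 1) := by
    rw [hg]
    refine DifferentiableOn.div (hψdiff.mono hball1R) (hχdiff.mono hball1R) ?_
    intro x hx
    refine hχne ?_
    rw [mem_ball_zero_iff, Complex.norm_eq_abs] at hx
    exact hx.le
  -- scaled inequality
  have hratio : ∀ {x : ℂ}, Complex.abs x ≤ 1 → x ∈ U →
      Complex.abs (ψ x) ≤ Complex.abs (χ x) := by
    intro x hx hxU
    have hMdx : Md x ≠ 0 := hMdne hx
    set ω : ℂ := Mn x / Md x with hω
    have hωabs : Complex.abs ω ≤ 1 := by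
      rw [hω, map_div₀]
      exact div_le_one_of_le₀ (hMabs hx) (Complex.abs.nonneg _)
    have hkey := gamma_ineq (hfmap hxU) hωabs
    have hψx : ψ x = Md x * (2*ω*(f x).2 - (f x).1) := by
      rw [hψ, hω]
      field_simp
      try ring
    have hχx : χ x = Md x * (2 - ω*(f x).1) := by
      rw [hχ, hω]
      field_simp
      try ring
    rw [hψx, hχx, map_mul, map_mul]
    exact mul_le_mul_of_nonneg_left hkey (Complex.abs.nonneg _)
  have hgb : ∀ x ∈ ball (0:ℂ) 1, Complex.abs (g x) ≤ 1 := by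
    intro x hx
    rw [mem_ball_zero_iff, Complex.norm_eq_abs] at hx
    rw [hg, map_div₀]
    exact div_le_one_of_le₀ (hratio hx.le (hUsub (by
      rw [mem_closedBall_zero_iff, Complex.norm_eq_abs]; exact hx.le)))
      (Complex.abs.nonneg _)
  -- interpolation of g
  have hgint : ∀ j, g (lam j) = blFun cq aq (lam j) := by
    intro j
    have hjb : Complex.abs (lam j) < 1 := hlamabs j
    have hjU : lam j ∈ U := hUsub (by
      rw [mem_closedBall_zero_iff, Complex.norm_eq_abs]; exact hjb.le)
    have hm : m (lam j) = Mn (lam j) / Md (lam j) := by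
      rw [hmform (lam j) (hlam j), hMn, hMd, ← blFun_eq_div]
      rfl
    have hq : q (lam j) = blFun cq aq (lam j) := by
      rw [hqform (lam j) (hlam j)]
      rfl
    have hP := hPhi j
    rw [hm, hq] at hP
    rw [← hP, Phi]
    have hMdj : Md (lam j) ≠ 0 := hMdne hjb.le
    have hχj : χ (lam j) ≠ 0 := hχne hjb.le
    have hsj : (z j).1 = f1 (lam j) := by rw [hf1def]; simp only []; rw [hfint j]
    have hpj : (z j).2 = f2 (lam j) := by rw [hf2def]; simp only []; rw [hfint j]
    have hχval : χ (lam j) = Md (lam j) * (2 - (Mn (lam j)/Md (lam j)) * (z j).1) := by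
      rw [hχ, hsj]
      field_simp
      try ring
    have hψval : ψ (lam j) = Md (lam j) * (2 * (Mn (lam j)/Md (lam j)) * (z j).2 - (z j).1) := by
      rw [hψ, hsj, hpj]
      field_simp
      try ring
    have hden : 2 - (Mn (lam j)/Md (lam j)) * (z j).1 ≠ 0 := by
      intro hcon
      apply hχj
      rw [hχval, hcon, mul_zero]
    rw [hg]
    simp only []
    rw [hψval, hχval, mul_div_mul_left _ _ hMdj]
  -- apply Pick uniqueness with the first dq+1 nodes
  have hdq1 : dq + 1 ≤ n := by omega
  set lam' : Fin (dq+1) → ℂ := fun j => lam (Fin.castLE hdq1 j) with hlam'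
  have hEqOn : ∀ x ∈ ball (0:ℂ) 1, g x = blFun cq aq x := by
    refine pick_unique dq cq aq hcq haq lam' (fun j => hlamabs _)
      (hinj.comp (Fin.castLE_injective hdq1)) g hgdiff hgb (fun j => hgint _)
  -- identity theorem: ψ Qd = χ Qn on ball 0 R
  set W : ℂ → ℂ := fun x => ψ x * Qd x - χ x * Qn x with hW
  have hWdiff : DifferentiableOn ℂ W (ball 0 R) := by
    rw [hW]
    exact (hψdiff.mul (hQddiff.differentiableOn)).sub (hχdiff.mul (hQndiff.differentiableOn))
  have hWzero1 : ∀ x ∈ ball (0:ℂ) 1, W x = 0 := by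
    intro x hx
    have hx1 : Complex.abs x ≤ 1 := by
      rw [mem_ball_zero_iff, Complex.norm_eq_abs] at hx; exact hx.le
    have h1 := hEqOn x hx
    rw [hg, blFun_eq_div] at h1
    have hχx : χ x ≠ 0 := hχne hx1
    have hQdx : Qd x ≠ 0 := hQdne hx1
    rw [div_eq_div_iff hχx hQdx] at h1
    rw [hW]
    simp only []
    simp only [← hQn, ← hQd] at h1
    linear_combination h1
  have hWzero : ∀ x ∈ ball (0:ℂ) R, W x = 0 := by
    have hana : AnalyticOnNhd ℂ W (ball 0 R) := hWdiff.analyticOnNhd isOpen_ball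
    have h0mem : (0:ℂ) ∈ ball (0:ℂ) R := by
      rw [mem_ball_zero_iff]; simpa using (by linarith : (0:ℝ) < R)
    have hev : W =ᶠ[nhds (0:ℂ)] 0 := by
      have hmem : ball (0:ℂ) 1 ∈ nhds (0:ℂ) := isOpen_ball.mem_nhds (by
        rw [mem_ball_zero_iff]; norm_num)
      filter_upwards [hmem] with y hy
      exact hWzero1 y hy
    intro x hx
    exact hana.eqOn_zero_of_preconnected_of_eventuallyEq_zero
      (convex_ball (0:ℂ) R).isPreconnected h0mem hev hx
  -- boundary point 1
  have h1cb : Complex.abs (1:ℂ) ≤ 1 := by simp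
  have h1R : (1:ℂ) ∈ ball (0:ℂ) R := by
    rw [mem_ball_zero_iff]
    simpa using hR1
  have hW1 : ψ 1 * Qd 1 = χ 1 * Qn 1 := by
    have := hWzero 1 h1R
    rw [hW] at this
    linear_combination this
  set ω : ℂ := Mn 1 / Md 1 with hωdef
  have hMd1 : Md 1 ≠ 0 := hMdne h1cb
  have hQd1 : Qd 1 ≠ 0 := hQdne h1cb
  have hωabs : Complex.abs ω = 1 := by
    rw [hωdef, map_div₀, blFun_abs_one hcm]
    exact div_self (Complex.abs.ne_zero (hMdne h1cb))
  -- φ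
  set φ : ℂ → ℂ := fun x => (2*ω*f2 x - f1 x) / (2 - ω*f1 x) with hφ
  have hφden : ∀ x ∈ ball (0:ℂ) R, 2 - ω*f1 x ≠ 0 := by
    intro x hx hcon
    have : Complex.abs (ω * f1 x) = 2 := by
      have h2 : ω * f1 x = 2 := by linear_combination -hcon
      rw [h2, Complex.abs_two]
    rw [map_mul, hωabs, one_mul] at this
    exact hf1no2 x hx this
  have hφdiff : DifferentiableOn ℂ φ (ball 0 R) := by
    rw [hφ]
    refine DifferentiableOn.div ?_ ?_ hφden
    · exact ((hf2diff.mono hballR).const_mul _).sub (hf1diff.mono hballR)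
    · exact (differentiableOn_const 2).sub ((hf1diff.mono hballR).const_mul ω)
  have hφb : ∀ x ∈ ball (0:ℂ) R, Complex.abs (φ x) ≤ 1 := by
    intro x hx
    have hkey := gamma_ineq (hfmap (hballR hx)) (le_of_eq hωabs)
    rw [hφ, map_div₀]
    exact div_le_one_of_le₀ hkey (Complex.abs.nonneg _)
  have hφ1 : φ 1 = Qn 1 / Qd 1 := by
    have hψ1 : ψ 1 = Md 1 * (2*ω*f2 1 - f1 1) := by
      rw [hψ, hωdef]
      field_simp
      try ring
    have hχ1 : χ 1 = Md 1 * (2 - ω*f1 1) := by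
      rw [hχ, hωdef]
      field_simp
      try ring
    have hχ1ne : χ 1 ≠ 0 := hχne h1cb
    have hden1 : 2 - ω*f1 1 ≠ 0 := hφden 1 h1R
    rw [hφ]
    simp only []
    rw [div_eq_div_iff hden1 hQd1]
    have := hW1
    rw [hψ1, hχ1] at this
    have h2 : (2*ω*f2 1 - f1 1) * Qd 1 * Md 1 = (2 - ω*f1 1) * Qn 1 * Md 1 := by
      linear_combination this
    field_simp at h2
    linear_combination h2
  have hφ1abs : Complex.abs (φ 1) = 1 := by
    rw [hφ1, map_div₀, blFun_abs_one hcq]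
    exact div_self (Complex.abs.ne_zero hQd1)
  have hconst := eq_const_of_max hφdiff hφb h1R hφ1abs
  have hφj := hconst (hlamball j₀)
  rw [Function.const_apply] at hφj
  have hstrict : Complex.abs (φ (lam j₀)) < 1 := by
    have hkey := G_ineq_strict (hz j₀) (le_of_eq hωabs)
    have hsj : (z j₀).1 = f1 (lam j₀) := by rw [hf1def]; simp only []; rw [hfint j₀]
    have hpj : (z j₀).2 = f2 (lam j₀) := by rw [hf2def]; simp only []; rw [hfint j₀]
    rw [hsj, hpj] at hkey
    have hdenpos : 0 < Complex.abs (2 - ω*f1 (lam j₀)) :=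
      Complex.abs.pos (hφden (lam j₀) (hlamball j₀))
    rw [hφ, map_div₀]
    rw [div_lt_one hdenpos]
    exact hkey
  rw [hφj, hφ1abs] at hstrict
  exact absurd hstrict (lt_irrefl 1)

end AYhelpers
end

section
/- Let λ_1,…,λ_n be distinct points of 𝔻 and let q be a Blaschke product of degree at most n−1. If f is in the Schur class and f(λ_j) = q(λ_j) for j = 1,…,n, then f = q on 𝔻. In other words, any n-point Nevanlinna–Pick problem that is solved by a Blaschke product of degree at most n−1 has a unique Schur-class solution. -/
open Set Metric

open Polynomial

local notation "conj'" => starRingEnd ℂ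

noncomputable def creflect (d : ℕ) (p : Polynomial ℂ) : Polynomial ℂ :=
  (p.map (starRingEnd ℂ)).reflect d

lemma coeff_creflect (d : ℕ) (p : Polynomial ℂ) (i : ℕ) :
    (creflect d p).coeff i = conj' (p.coeff (revAt d i)) := by
  simp [creflect, coeff_reflect, Polynomial.coeff_map]

lemma natDegree_creflect_le {d : ℕ} {p : Polynomial ℂ} (hp : p.natDegree ≤ d) :
    (creflect d p).natDegree ≤ d := by
  rw [natDegree_le_iff_coeff_eq_zero]
  intro m hm
  rw [coeff_creflect, revAt_eq_self_of_lt hm, coeff_eq_zero_of_natDegree_lt (lt_of_le_of_lt hp hm)]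
  simp

lemma creflect_creflect (d : ℕ) (p : Polynomial ℂ) : creflect d (creflect d p) = p := by
  ext i
  simp [coeff_creflect]

lemma creflect_sub (d : ℕ) (p q : Polynomial ℂ) :
    creflect d (p - q) = creflect d p - creflect d q := by
  ext i
  simp [coeff_creflect, map_sub]

lemma creflect_C_mul (d : ℕ) (a : ℂ) (p : Polynomial ℂ) :
    creflect d (C a * p) = C (conj' a) * creflect d p := by
  ext i
  simp [coeff_creflect, coeff_C_mul, map_mul]

lemma creflect_mul {a b : ℕ} {p q : Polynomial ℂ} (hp : p.natDegree ≤ a) (hq : q.natDegree ≤ b) :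
    creflect (a + b) (p * q) = creflect a p * creflect b q := by
  unfold creflect
  rw [Polynomial.map_mul]
  exact reflect_mul _ _ (natDegree_map_le.trans hp) (natDegree_map_le.trans hq)

lemma creflect_X_sub_C (l : ℂ) : creflect 1 (X - C l) = 1 - C (conj' l) * X := by
  ext i
  rw [coeff_creflect]
  match i with
  | 0 => simp [revAt_le, coeff_one]
  | 1 => simp [revAt_le, coeff_one]
  | (n+2) =>
    rw [revAt_eq_self_of_lt (by omega)]
    simp only [coeff_sub, coeff_X, coeff_C, coeff_one, coeff_C_mul]
    norm_num

lemma eval_creflect {d : ℕ} {p : Polynomial ℂ} (hp : p.natDegree ≤ d) {z : ℂ} (hz : z ≠ 0) :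
    eval z (creflect d p) = z ^ d * eval z⁻¹ (p.map conj') := by
  letI : Invertible (z⁻¹) := invertibleOfNonzero (inv_ne_zero hz)
  have h := eval₂_reflect_mul_pow (RingHom.id ℂ) (z⁻¹) d (p.map conj')
    (natDegree_map_le.trans hp)
  rw [invOf_eq_inv, inv_inv] at h
  simp only [Polynomial.eval₂_eq_eval_map, Polynomial.map_id] at h
  have hzd : (z⁻¹) ^ d ≠ 0 := pow_ne_zero _ (inv_ne_zero hz)
  field_simp [creflect] at h ⊢
  rw [← h, creflect, one_div, inv_pow, inv_mul_cancel_right₀ (pow_ne_zero _ hz)]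

lemma eval_creflect_circle {d : ℕ} {p : Polynomial ℂ} (hp : p.natDegree ≤ d) {z : ℂ}
    (hz : ‖z‖ = 1) :
    eval z (creflect d p) = z ^ d * conj' (eval z p) := by
  have hz0 : z ≠ 0 := by
    intro h; rw [h] at hz; simp at hz
  rw [eval_creflect hp hz0, Complex.inv_eq_conj hz, Polynomial.eval_map, eval₂_at_apply]

lemma abs_eval_creflect_circle {d : ℕ} {p : Polynomial ℂ} (hp : p.natDegree ≤ d) {z : ℂ}
    (hz : ‖z‖ = 1) :
    ‖eval z (creflect d p)‖ = ‖eval z p‖ := by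
  rw [eval_creflect_circle hp hz]
  simp [norm_mul, norm_pow, hz]

lemma natDegree_prod_X_sub_C_le (d : ℕ) (a : Fin d → ℂ) :
    (∏ i, (X - C (a i))).natDegree ≤ d := by
  refine (natDegree_prod_le _ _).trans ?_
  simp [natDegree_X_sub_C]

lemma creflect_prod : ∀ (d : ℕ) (a : Fin d → ℂ),
    creflect d (∏ i, (X - C (a i))) = ∏ i, (1 - C (conj' (a i)) * X)
  | 0, a => by
    ext i
    rw [coeff_creflect]
    match i with
    | 0 => simp
    | (n+1) => rw [revAt_eq_self_of_lt (by omega)]; simp [coeff_one]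
  | (d+1), a => by
    have h := creflect_mul (a := 1) (b := d) (p := X - C (a 0))
      (q := ∏ i, (X - C (a i.succ))) (natDegree_X_sub_C (a 0)).le
      (natDegree_prod_X_sub_C_le d _)
    rw [show 1 + d = d + 1 from by omega, creflect_X_sub_C, creflect_prod d _] at h
    rw [Fin.prod_univ_succ, Fin.prod_univ_succ, h]

lemma normSq_mobius (u w : ℂ) :
    Complex.normSq (1 - conj' w * u) - Complex.normSq (u - w)
      = (1 - Complex.normSq u) * (1 - Complex.normSq w) := by
  simp only [Complex.normSq_apply, Complex.mul_re, Complex.mul_im, Complex.sub_re,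
    Complex.sub_im, Complex.one_re, Complex.one_im, Complex.conj_re, Complex.conj_im]
  ring

lemma abs_mobius_le {u w : ℂ} (hu : ‖u‖ ≤ 1) (hw : ‖w‖ ≤ 1) :
    ‖u - w‖ ≤ ‖1 - conj' w * u‖ := by
  have h := normSq_mobius u w
  have h1 : Complex.normSq u ≤ 1 := by
    rw [← Complex.sq_norm]; nlinarith [norm_nonneg u]
  have h2 : Complex.normSq w ≤ 1 := by
    rw [← Complex.sq_norm]; nlinarith [norm_nonneg w]
  rw [Complex.norm_def, Complex.norm_def]
  apply Real.sqrt_le_sqrt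
  nlinarith

lemma one_sub_ne_zero_of_abs_lt {a : ℂ} (h : ‖a‖ < 1) : (1 : ℂ) - a ≠ 0 := by
  intro h0
  have : a = 1 := by linear_combination -h0
  rw [this] at h
  simp at h

lemma schur_step (f : ℂ → ℂ) (hf : DifferentiableOn ℂ f (ball (0:ℂ) 1))
    (hf1 : ∀ z ∈ ball (0:ℂ) 1, ‖f z‖ ≤ 1)
    (l0 w : ℂ) (hl0 : ‖l0‖ < 1) (hw : ‖w‖ < 1) (hfl0 : f l0 = w) :
    ∃ g : ℂ → ℂ, DifferentiableOn ℂ g (ball (0:ℂ) 1) ∧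
      (∀ z ∈ ball (0:ℂ) 1, ‖g z‖ ≤ 1) ∧
      ∀ z ∈ ball (0:ℂ) 1,
        (f z - w) * (1 - conj' l0 * z) = g z * ((1 - conj' w * f z) * (z - l0)) := by
  have hl0mem : l0 ∈ ball (0:ℂ) 1 := by simpa [mem_ball_zero_iff] using hl0
  have hden : ∀ z ∈ ball (0:ℂ) 1, (1 : ℂ) - conj' w * f z ≠ 0 := by
    intro z hz
    apply one_sub_ne_zero_of_abs_lt
    rw [norm_mul]
    calc ‖conj' w‖ * ‖f z‖ ≤ ‖w‖ * 1 := by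
          rw [Complex.norm_conj]
          exact mul_le_mul_of_nonneg_left (hf1 z hz) (norm_nonneg w)
      _ < 1 := by simpa using hw
  set F : ℂ → ℂ := fun z => (f z - w) / (1 - conj' w * f z) with hF
  have hFdiff : DifferentiableOn ℂ F (ball (0:ℂ) 1) := by
    apply DifferentiableOn.div (hf.sub_const w)
    · exact (differentiableOn_const _).sub ((differentiableOn_const _).mul hf)
    · exact hden
  have hFl0 : F l0 = 0 := by simp [hF, hfl0]
  have hFle : ∀ z ∈ ball (0:ℂ) 1, ‖F z‖ ≤ 1 := by
    intro z hz
    rw [hF]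
    simp only [norm_div]
    rw [div_le_one (norm_pos_iff.mpr (hden z hz))]
    exact abs_mobius_le (hf1 z hz) hw.le
  set g : ℂ → ℂ := fun z => dslope F l0 z * (1 - conj' l0 * z) with hg
  have hgdiff : DifferentiableOn ℂ g (ball (0:ℂ) 1) := by
    apply DifferentiableOn.mul
    · exact (Complex.differentiableOn_dslope (isOpen_ball.mem_nhds hl0mem)).2 hFdiff
    · exact (differentiableOn_const _).sub ((differentiableOn_const _).mul differentiableOn_id)
  have hgeq : ∀ z : ℂ, z ≠ l0 → g z = F z * (1 - conj' l0 * z) / (z - l0) := by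
    intro z hzl
    rw [hg]
    simp only
    rw [dslope_of_ne F hzl, slope_def_field, hFl0]
    field_simp
    ring
  have hgid : ∀ z ∈ ball (0:ℂ) 1,
      (f z - w) * (1 - conj' l0 * z) = g z * ((1 - conj' w * f z) * (z - l0)) := by
    intro z hz
    rcases eq_or_ne z l0 with rfl | hzl
    · rw [hfl0]; ring
    · rw [hgeq z hzl]
      have h1 : (1 : ℂ) - conj' w * f z ≠ 0 := hden z hz
      have h2 : z - l0 ≠ 0 := sub_ne_zero.2 hzl
      field_simp [hF]
      simp only [hF]
      rw [show (1:ℂ) - f z * conj' w = 1 - conj' w * f z by ring, mul_assoc, div_mul_cancel₀ _ h1]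
      ring
  refine ⟨g, hgdiff, ?_, hgid⟩
  intro z0 hz0
  rw [mem_ball_zero_iff] at hz0
  have hz0a : ‖z0‖ < 1 := hz0
  set A := ‖l0‖ with hA
  set T : ℝ → ℝ := fun r => Real.sqrt (1 + (1 - A^2) * (1 - r^2) / (r - A)^2) with hT
  have hA1 : A < 1 := hl0
  have hA0 : 0 ≤ A := norm_nonneg l0
  have hbound : ∀ r ∈ Ioo (max (‖z0‖) A) 1, ‖g z0‖ ≤ T r := by
    intro r hr
    obtain ⟨hr1, hr2⟩ := hr
    have hrA : A < r := lt_of_le_of_lt (le_max_right _ _) hr1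
    have hr0 : (0:ℝ) < r := lt_of_le_of_lt hA0 hrA
    have hfr : ∀ ζ ∈ sphere (0:ℂ) r, ‖g ζ‖ ≤ T r := by
      intro ζ hζ
      rw [mem_sphere_zero_iff_norm] at hζ
      have hζa : ‖ζ‖ = r := by exact hζ
      have hζball : ζ ∈ ball (0:ℂ) 1 := by
        rw [mem_ball_zero_iff, hζ]; exact hr2
      have hζl0 : ζ ≠ l0 := by
        intro h; rw [h] at hζa; rw [← hζa] at hrA; exact lt_irrefl _ hrA
      have hsub : r - A ≤ ‖ζ - l0‖ := by
        calc r - A = ‖ζ‖ - ‖l0‖ := by rw [hζa]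
          _ ≤ ‖ζ - l0‖ := by
              simpa using norm_sub_norm_le ζ l0
      have hrApos : (0:ℝ) < r - A := by linarith
      have hsubpos : (0:ℝ) < ‖ζ - l0‖ := lt_of_lt_of_le hrApos hsub
      set s := ‖ζ - l0‖ with hs
      have hB0 : (0:ℝ) ≤ (1 - A^2) * (1 - r^2) :=
        mul_nonneg (by nlinarith) (by nlinarith)
      have hx : ‖1 - conj' l0 * ζ‖^2 = s^2 + (1 - A^2) * (1 - r^2) := by
        have hkey := normSq_mobius ζ l0
        have hnζ : Complex.normSq ζ = r^2 := by rw [← Complex.sq_norm, hζa]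
        have hnl0 : Complex.normSq l0 = A^2 := by rw [← Complex.sq_norm]
        rw [hnζ, hnl0] at hkey
        rw [hs, Complex.sq_norm, Complex.sq_norm]
        linear_combination hkey
      have hTr2 : T r ^ 2 = 1 + (1 - A^2) * (1 - r^2) / (r - A)^2 := by
        rw [hT]
        apply Real.sq_sqrt
        have : (0:ℝ) ≤ (1 - A^2) * (1 - r^2) / (r - A)^2 :=
          div_nonneg hB0 (sq_nonneg _)
        linarith
      have h2 : ‖1 - conj' l0 * ζ‖^2 ≤ (T r * s)^2 := by
        rw [mul_pow, hTr2, hx]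
        have e1 : (1 - A^2) * (1 - r^2) / (r - A)^2 * (r - A)^2 = (1 - A^2) * (1 - r^2) :=
          div_mul_cancel₀ _ (ne_of_gt (pow_pos hrApos 2))
        have e2 : (0:ℝ) ≤ (1 - A^2) * (1 - r^2) / (r - A)^2 * (s^2 - (r - A)^2) := by
          apply mul_nonneg (div_nonneg hB0 (sq_nonneg _))
          have : (r - A)^2 ≤ s^2 := by nlinarith
          linarith
        nlinarith
      have hTnn : 0 ≤ T r := Real.sqrt_nonneg _
      have hratio : ‖1 - conj' l0 * ζ‖ ≤ T r * s := by
        have hbn : (0:ℝ) ≤ T r * s := mul_nonneg hTnn (norm_nonneg _)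
        calc ‖1 - conj' l0 * ζ‖
            = Real.sqrt (‖1 - conj' l0 * ζ‖^2) :=
              (Real.sqrt_sq (norm_nonneg _)).symm
          _ ≤ Real.sqrt ((T r * s)^2) := Real.sqrt_le_sqrt h2
          _ = T r * s := Real.sqrt_sq hbn
      rw [hgeq ζ hζl0, norm_div, norm_mul]
      rw [div_le_iff₀ hsubpos]
      calc ‖F ζ‖ * ‖1 - conj' l0 * ζ‖
          ≤ 1 * (T r * s) := by
            apply mul_le_mul (hFle ζ hζball) hratio (norm_nonneg _) zero_le_one
        _ = T r * s := one_mul _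
    have hcl : closure (ball (0:ℂ) r) = closedBall (0:ℂ) r := closure_ball _ (ne_of_gt hr0)
    have hdc : DiffContOnCl ℂ g (ball (0:ℂ) r) := by
      apply DifferentiableOn.diffContOnCl
      rw [hcl]
      exact hgdiff.mono (closedBall_subset_ball hr2)
    have hz0cl : z0 ∈ closure (ball (0:ℂ) r) := by
      rw [hcl, mem_closedBall_zero_iff]
      exact le_of_lt (lt_of_le_of_lt (le_max_left _ _) hr1)
    have hb := Complex.norm_le_of_forall_mem_frontier_norm_le isBounded_ball hdc
      (fun ζ hζ => hfr ζ (by rwa [frontier_ball (0:ℂ) (ne_of_gt hr0)] at hζ)) hz0cl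
    simpa using hb
  have hmax1 : max (‖z0‖) A < 1 := max_lt hz0a hA1
  have hIoo : Ioo (max (‖z0‖) A) 1 ∈ nhdsWithin (1:ℝ) (Iio 1) :=
    Ioo_mem_nhdsLT_of_mem ⟨hmax1, le_refl 1⟩
  have hcont : ContinuousAt T 1 := by
    have h1 : ((1:ℝ) - A)^2 ≠ 0 := pow_ne_zero _ (by linarith)
    apply ContinuousAt.sqrt
    exact continuousAt_const.add
      (((continuousAt_const.sub (continuousAt_id.pow 2)).const_mul _).div
        ((continuousAt_id.sub continuousAt_const).pow 2) h1)
  have hT1 : T 1 = 1 := by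
    rw [hT]
    norm_num
  have hts : Filter.Tendsto T (nhdsWithin (1:ℝ) (Iio 1)) (nhds 1) := by
    have := hcont.tendsto
    rw [hT1] at this
    exact this.mono_left nhdsWithin_le_nhds
  exact ge_of_tendsto hts (Filter.eventually_of_mem hIoo hbound)

lemma abs_le_one_closed {d : ℕ} {c : ℂ} {N : Polynomial ℂ} (hc : ‖c‖ = 1)
    (hN : N.natDegree ≤ d) (hD : ∀ z : ℂ, ‖z‖ ≤ 1 → eval z (creflect d N) ≠ 0) :
    ∀ z : ℂ, ‖z‖ ≤ 1 →
      ‖eval z N / (c * eval z (creflect d N))‖ ≤ 1 := by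
  have hc0 : c ≠ 0 := by
    intro h; rw [h] at hc; simp at hc
  set Q : ℂ → ℂ := fun z => eval z N / (c * eval z (creflect d N)) with hQ
  have hQd : DifferentiableOn ℂ Q (closedBall (0:ℂ) 1) := by
    apply DifferentiableOn.div
    · exact (Polynomial.differentiable N).differentiableOn
    · exact ((Polynomial.differentiable _).differentiableOn.const_mul c)
    · intro z hz
      rw [mem_closedBall_zero_iff] at hz
      exact mul_ne_zero hc0 (hD z hz)
  have hdc : DiffContOnCl ℂ Q (ball (0:ℂ) 1) := by
    apply DifferentiableOn.diffContOnCl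
    rw [closure_ball (0:ℂ) one_ne_zero]
    exact hQd
  intro z hz
  have hcl : z ∈ closure (ball (0:ℂ) 1) := by
    rw [closure_ball (0:ℂ) one_ne_zero, mem_closedBall_zero_iff]
    exact hz
  have hb := Complex.norm_le_of_forall_mem_frontier_norm_le isBounded_ball hdc
    (C := 1) (fun ζ hζ => ?_) hcl
  · exact hb
  · rw [frontier_ball (0:ℂ) one_ne_zero, mem_sphere_zero_iff_norm] at hζ
    have hζa : ‖ζ‖ = 1 := by exact hζ
    have hNe : ‖eval ζ (creflect d N)‖ = ‖eval ζ N‖ :=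
      abs_eval_creflect_circle hN hζa
    have hne0 : eval ζ (creflect d N) ≠ 0 := hD ζ hζa.le
    have habs : ‖eval ζ N‖ ≠ 0 := by
      rw [← hNe]
      exact norm_ne_zero_iff.mpr hne0
    rw [hQ]
    simp only [norm_div, norm_mul, hc, hNe, one_mul]
    rw [div_self habs]

lemma creflect_zero_C (a : ℂ) : creflect 0 (C a) = C (conj' a) := by
  ext i
  rw [coeff_creflect]
  match i with
  | 0 => simp
  | (n+1) => rw [revAt_eq_self_of_lt (by omega)]; simp

lemma mul_conj_eq_one {c : ℂ} (hc : ‖c‖ = 1) : c * conj' c = 1 := by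
  have : Complex.normSq c = 1 := by
    rw [← Complex.sq_norm, hc]; norm_num
  rw [Complex.mul_conj, this, Complex.ofReal_one]

lemma key (d : ℕ) : ∀ (q f : ℂ → ℂ) (c : ℂ) (N : Polynomial ℂ),
    ‖c‖ = 1 → N.natDegree ≤ d →
    (∀ z : ℂ, ‖z‖ ≤ 1 → eval z (creflect d N) ≠ 0) →
    (∀ z : ℂ, ‖z‖ < 1 → q z = eval z N / (c * eval z (creflect d N))) →
    DifferentiableOn ℂ f (ball (0:ℂ) 1) →
    (∀ z ∈ ball (0:ℂ) 1, ‖f z‖ ≤ 1) →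
    ∀ lam : Fin (d+1) → ℂ, (∀ j, ‖lam j‖ < 1) → Function.Injective lam →
    (∀ j, f (lam j) = q (lam j)) →
    ∀ z : ℂ, ‖z‖ < 1 → f z = q z := by
  induction d with
  | zero =>
    intro q f c N hc hN hD hq hf hf1 lam hlam hinj hint z hz
    have hNC : N = C (N.coeff 0) := eq_C_of_natDegree_le_zero hN
    set a := N.coeff 0 with ha
    have hane : a ≠ 0 := by
      intro h
      have := hD 0 (by norm_num)
      rw [hNC, h, creflect_zero_C] at this
      simp at this
    have hu : ∀ ζ : ℂ, ‖ζ‖ < 1 → q ζ = a / (c * conj' a) := by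
      intro ζ hζ
      rw [hq ζ hζ, hNC, creflect_zero_C]
      simp
    have huabs : ‖a / (c * conj' a)‖ = 1 := by
      rw [norm_div, norm_mul, hc, Complex.norm_conj, one_mul, div_self]
      exact norm_ne_zero_iff.mpr hane
    have hl0 : lam 0 ∈ ball (0:ℂ) 1 := by
      rw [mem_ball_zero_iff]; exact hlam 0
    have hfl0 : ‖f (lam 0)‖ = 1 := by
      rw [hint 0, hu (lam 0) (hlam 0), huabs]
    have hmax : IsMaxOn (norm ∘ f) (ball (0:ℂ) 1) (lam 0) := by
      intro ζ hζ
      simp only [Function.comp_apply, hfl0]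
      exact hf1 ζ hζ
    have heq := Complex.eqOn_of_isPreconnected_of_isMaxOn_norm
      (convex_ball (0:ℂ) 1).isPreconnected isOpen_ball hf hl0 hmax
    have := heq (by rw [mem_ball_zero_iff]; exact hz : z ∈ ball (0:ℂ) 1)
    rw [this, Function.const_apply, hint 0, hu (lam 0) (hlam 0), hu z hz]
  | succ d ih =>
    intro q f c N hc hN hD hq hf hf1 lam hlam hinj hint
    have hcne : c ≠ 0 := by
      intro h; rw [h] at hc; simp at hc
    have hcc : c * conj' c = 1 := mul_conj_eq_one hc
    set D := creflect (d+1) N with hDdef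
    set Q : ℂ → ℂ := fun z => eval z N / (c * eval z D) with hQdef
    have hQ1 : ∀ z : ℂ, ‖z‖ ≤ 1 → ‖Q z‖ ≤ 1 :=
      abs_le_one_closed hc hN hD
    set l0 := lam 0 with hl0def
    have hl0 : ‖l0‖ < 1 := hlam 0
    have hl0mem : l0 ∈ ball (0:ℂ) 1 := by rw [mem_ball_zero_iff]; exact hl0
    set w := Q l0 with hwdef
    have hqQ : ∀ z : ℂ, ‖z‖ < 1 → q z = Q z := hq
    have hfl0 : f l0 = w := by rw [hint 0, hqQ l0 hl0]
    have hNle : ∀ z : ℂ, ‖z‖ ≤ 1 →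
        ‖eval z N‖ ≤ ‖eval z D‖ := by
      intro z hz
      have h1 := hQ1 z hz
      rw [hQdef] at h1
      simp only [norm_div, norm_mul, hc, one_mul] at h1
      have hDz : 0 < ‖eval z D‖ := norm_pos_iff.mpr (hD z hz)
      rw [div_le_one hDz] at h1
      exact h1
    rcases lt_or_ge (‖w‖) 1 with hw | hw1
    · -- main case : Schur reduction
      set P := N - C (w * c) * D with hPdef
      have hDdeg : D.natDegree ≤ d + 1 := natDegree_creflect_le hN
      have hPdeg : P.natDegree ≤ d + 1 :=
        le_trans (natDegree_sub_le _ _) (max_le hN ((natDegree_C_mul_le _ _).trans hDdeg))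
      have hDl0 : eval l0 D ≠ 0 := hD l0 hl0.le
      have hwc : w * (c * eval l0 D) = eval l0 N := by
        rw [hwdef, hQdef]
        exact div_mul_cancel₀ _ (mul_ne_zero hcne hDl0)
      have hPl0 : IsRoot P l0 := by
        simp only [IsRoot, hPdef, eval_sub, eval_mul, eval_C]
        linear_combination -hwc
      set N1 := P /ₘ (X - C l0) with hN1def
      have hfact : (X - C l0) * N1 = P := mul_divByMonic_eq_iff_isRoot.mpr hPl0
      have hN1deg : N1.natDegree ≤ d := by
        rcases eq_or_ne N1 0 with h | h
        · simp [h]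
        · have h2 := natDegree_mul (X_sub_C_ne_zero l0) h
          rw [hfact] at h2
          rw [natDegree_X_sub_C] at h2
          omega
      set D1 := creflect d N1 with hD1def
      have hreflP : creflect (d+1) P = D - C (conj' w * conj' c) * N := by
        rw [hPdef, creflect_sub, creflect_C_mul, hDdef, creflect_creflect, map_mul]
      have hreflfact : creflect (d+1) P = (1 - C (conj' l0) * X) * D1 := by
        conv_lhs => rw [← hfact]
        have h3 := creflect_mul (a := 1) (b := d) (p := X - C l0) (q := N1)
          (natDegree_X_sub_C l0).le hN1deg
        rw [show 1 + d = d + 1 from by omega] at h3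
        rw [h3, creflect_X_sub_C]
      have hA : ∀ z : ℂ, eval z N - (w * c) * eval z D = (z - l0) * eval z N1 := by
        intro z
        have h4 := congrArg (eval z) hfact
        simp only [eval_mul, eval_sub, eval_C, eval_X, hPdef] at h4
        linear_combination -h4
      have hB : ∀ z : ℂ, eval z D - conj' w * conj' c * eval z N = (1 - conj' l0 * z) * eval z D1 := by
        intro z
        have h4 := congrArg (eval z) (hreflP.symm.trans hreflfact)
        simp only [eval_mul, eval_sub, eval_one, eval_C, eval_X] at h4
        linear_combination h4
      have hB' : ∀ z : ℂ, c * eval z D - conj' w * eval z N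
          = c * ((1 - conj' l0 * z) * eval z D1) := by
        intro z
        linear_combination c * hB z + conj' w * eval z N * hcc
      have hone_l0 : ∀ z : ℂ, ‖z‖ ≤ 1 → (1 : ℂ) - conj' l0 * z ≠ 0 := by
        intro z hz
        apply one_sub_ne_zero_of_abs_lt
        rw [norm_mul, Complex.norm_conj]
        calc ‖l0‖ * ‖z‖ ≤ ‖l0‖ * 1 :=
              mul_le_mul_of_nonneg_left hz (norm_nonneg _)
          _ < 1 := by simpa using hl0
      have hD1 : ∀ z : ℂ, ‖z‖ ≤ 1 → eval z D1 ≠ 0 := by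
        intro z hz
        have h5 := hB z
        have habs : ‖conj' w * conj' c * eval z N‖ < ‖eval z D‖ := by
          rw [norm_mul, norm_mul, Complex.norm_conj, Complex.norm_conj, hc, mul_one]
          have hDz : 0 < ‖eval z D‖ := norm_pos_iff.mpr (hD z hz)
          calc ‖w‖ * ‖eval z N‖
              ≤ ‖w‖ * ‖eval z D‖ :=
                mul_le_mul_of_nonneg_left (hNle z hz) (norm_nonneg _)
            _ < 1 * ‖eval z D‖ := by
                apply mul_lt_mul_of_pos_right hw hDz
            _ = ‖eval z D‖ := one_mul _
        have h6 : eval z D - conj' w * conj' c * eval z N ≠ 0 := by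
          intro h0
          have : eval z D = conj' w * conj' c * eval z N := by linear_combination h0
          rw [this] at habs
          exact lt_irrefl _ habs
        rw [h5] at h6
        exact fun h0 => h6 (by rw [h0, mul_zero])
      obtain ⟨g, hgdiff, hgle, hgid⟩ := schur_step f hf hf1 l0 w hl0 hw hfl0
      -- identity for Q
      have e2 : ∀ z : ℂ, ‖z‖ < 1 →
          (Q z - w) * (1 - conj' l0 * z)
            = (eval z N1 / (c * eval z D1)) * ((1 - conj' w * Q z) * (z - l0)) := by
        intro z hz
        have hDz := hD z hz.le
        have hD1z := hD1 z hz.le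
        have hAz := hA z
        have hBz := hB z
        have hden1 : c * eval z D ≠ 0 := mul_ne_zero hcne hDz
        have hden2 : c * eval z D1 ≠ 0 := mul_ne_zero hcne hD1z
        have h0 : Q z * (c * eval z D) = eval z N := div_mul_cancel₀ _ hden1
        have q1 : (Q z - w) * (c * eval z D) = (z - l0) * eval z N1 := by
          linear_combination h0 + hA z
        have q2 : (1 - conj' w * Q z) * (c * eval z D)
            = c * ((1 - conj' l0 * z) * eval z D1) := by
          linear_combination hB' z - conj' w * h0
        have h0' : eval z N1 / (c * eval z D1) * (c * eval z D1) = eval z N1 :=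
          div_mul_cancel₀ _ hden2
        refine mul_right_cancel₀ hden2 ?_
        refine mul_right_cancel₀ hden1 ?_
        linear_combination ((1 - conj' l0 * z) * (c * eval z D1)) * q1
          - ((z - l0) * (c * eval z D1)) * (eval z N1 / (c * eval z D1)) * q2
          - ((z - l0) * (c * ((1 - conj' l0 * z) * eval z D1))) * h0'
      have hone_w : ∀ z : ℂ, ‖z‖ ≤ 1 → (1 : ℂ) - conj' w * Q z ≠ 0 := by
        intro z hz
        apply one_sub_ne_zero_of_abs_lt
        rw [norm_mul, Complex.norm_conj]
        calc ‖w‖ * ‖Q z‖ ≤ ‖w‖ * 1 :=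
              mul_le_mul_of_nonneg_left (hQ1 z hz) (norm_nonneg _)
          _ < 1 := by simpa using hw
      have hgQ : ∀ j : Fin (d+1), g (lam j.succ)
          = eval (lam j.succ) N1 / (c * eval (lam j.succ) D1) := by
        intro j
        have hzb : ‖lam j.succ‖ < 1 := hlam _
        have hzl0 : lam j.succ ≠ l0 := by
          intro h
          exact Fin.succ_ne_zero j (hinj h)
        have e1 := hgid (lam j.succ) (mem_ball_zero_iff.mpr hzb)
        rw [hint j.succ, hqQ _ hzb] at e1
        have e2' := e2 (lam j.succ) hzb
        have hX : (1 - conj' w * Q (lam j.succ)) * (lam j.succ - l0) ≠ 0 :=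
          mul_ne_zero (hone_w _ hzb.le) (sub_ne_zero.2 hzl0)
        exact mul_right_cancel₀ hX (e1.symm.trans e2')
      have hgeq := ih (fun z => eval z N1 / (c * eval z D1)) g c N1 hc hN1deg hD1
        (fun z _ => rfl) hgdiff hgle (fun j => lam j.succ) (fun j => hlam _)
        (hinj.comp (Fin.succ_injective _)) hgQ
      intro z hz
      rcases eq_or_ne z l0 with rfl | hzl0
      · rw [hqQ _ hl0]
        exact hfl0
      · have e1 := hgid z (mem_ball_zero_iff.mpr hz)
        rw [hgeq z hz] at e1
        have e2' := e2 z hz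
        have hzero : (1 - conj' l0 * z) * ((1 - w * conj' w) * (f z - Q z)) = 0 := by
          linear_combination (1 - conj' w * Q z) * e1 - (1 - conj' w * f z) * e2'
        have h1 : (1 : ℂ) - conj' l0 * z ≠ 0 := hone_l0 z hz.le
        have h2 : (1 : ℂ) - w * conj' w ≠ 0 := by
          apply one_sub_ne_zero_of_abs_lt
          rw [norm_mul, Complex.norm_conj]
          nlinarith [norm_nonneg w]
        have h3 : f z - Q z = 0 := by
          rcases mul_eq_zero.mp hzero with h | h
          · exact absurd h h1
          · rcases mul_eq_zero.mp h with h' | h'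
            · exact absurd h' h2
            · exact h'
        rw [hqQ z hz]
        linear_combination h3
    · have hweq : ‖w‖ = 1 := le_antisymm (hQ1 l0 hl0.le) hw1
      have hQdiff : DifferentiableOn ℂ Q (ball (0:ℂ) 1) := by
        apply DifferentiableOn.div
        · exact (Polynomial.differentiable N).differentiableOn
        · exact ((Polynomial.differentiable D).differentiableOn.const_mul c)
        · intro z hz
          exact mul_ne_zero hcne (hD z (mem_ball_zero_iff.mp hz).le)
      have hQmax : IsMaxOn (norm ∘ Q) (ball (0:ℂ) 1) l0 := by
        intro ζ hζ
        simp only [Function.comp_apply, ← hwdef, hweq]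
        exact hQ1 ζ (mem_ball_zero_iff.mp hζ).le
      have hfmax : IsMaxOn (norm ∘ f) (ball (0:ℂ) 1) l0 := by
        intro ζ hζ
        simp only [Function.comp_apply, hfl0, hweq]
        exact hf1 ζ hζ
      have hQc := Complex.eqOn_of_isPreconnected_of_isMaxOn_norm
        (convex_ball (0:ℂ) 1).isPreconnected isOpen_ball hQdiff hl0mem hQmax
      have hfc := Complex.eqOn_of_isPreconnected_of_isMaxOn_norm
        (convex_ball (0:ℂ) 1).isPreconnected isOpen_ball hf hl0mem hfmax
      intro z hz
      have hzm : z ∈ ball (0:ℂ) 1 := mem_ball_zero_iff.mpr hz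
      rw [hfc hzm, hqQ z hz, hQc hzm, Function.const_apply, Function.const_apply, hfl0]


/-- An `n`-point Nevanlinna–Pick problem that is solved by a Blaschke
product of degree at most `n − 1` has a unique Schur-class solution: if `f` is in the
Schur class and agrees with such a `q` at `n` distinct points of `𝔻`, then `f = q`
on `𝔻`. -/
theorem blaschke_solution_unique
    {n : ℕ} (hn : 0 < n)
    (lam : Fin n → ℂ) (hlam : ∀ j, lam j ∈ ball (0:ℂ) 1)
    (hinj : Function.Injective lam)
    (q : ℂ → ℂ) (hq : IsBlaschkeDegLE (n - 1) q)
    (f : ℂ → ℂ) (hf : DifferentiableOn ℂ f (ball (0:ℂ) 1))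
    (hf1 : ∀ lam' ∈ ball (0:ℂ) 1, ‖f lam'‖ ≤ 1)
    (hinterp : ∀ j, f (lam j) = q (lam j)) :
    ∀ lam' ∈ ball (0:ℂ) 1, f lam' = q lam' := by
  obtain ⟨d, cB, a, hdn, hcB, ha, hqf⟩ := hq
  have hcBne : cB ≠ 0 := by
    intro h; rw [h] at hcB; simp at hcB
  set N : Polynomial ℂ := ∏ i, (X - C (a i)) with hNdef
  have hNdeg : N.natDegree ≤ d := natDegree_prod_X_sub_C_le d a
  have hrefl : creflect d N = ∏ i, (1 - C (conj' (a i)) * X) := creflect_prod d a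
  set c := cB⁻¹ with hcdef
  have hc : ‖c‖ = 1 := by rw [hcdef, norm_inv, hcB]; norm_num
  have hdz : ∀ z : ℂ, ‖z‖ ≤ 1 → ∀ i : Fin d, (1 : ℂ) - conj' (a i) * z ≠ 0 := by
    intro z hz i
    apply one_sub_ne_zero_of_abs_lt
    rw [norm_mul, Complex.norm_conj]
    calc ‖a i‖ * ‖z‖ ≤ ‖a i‖ * 1 :=
          mul_le_mul_of_nonneg_left hz (norm_nonneg _)
      _ < 1 := by simpa using ha i
  have hDnz : ∀ z : ℂ, ‖z‖ ≤ 1 → eval z (creflect d N) ≠ 0 := by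
    intro z hz
    rw [hrefl, eval_prod]
    apply Finset.prod_ne_zero_iff.mpr
    intro i _
    simp only [eval_sub, eval_one, eval_mul, eval_C, eval_X]
    exact hdz z hz i
  have hq' : ∀ z : ℂ, ‖z‖ < 1 → q z = eval z N / (c * eval z (creflect d N)) := by
    intro z hz
    rw [hqf z (mem_ball_zero_iff.mpr (by exact hz))]
    have hevalN : eval z N = ∏ i, (z - a i) := by
      rw [hNdef, eval_prod]; simp
    have hevalD : eval z (creflect d N) = ∏ i, ((1:ℂ) - conj' (a i) * z) := by
      rw [hrefl, eval_prod]; simp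
    have hYne : (∏ i, ((1:ℂ) - conj' (a i) * z)) ≠ 0 :=
      Finset.prod_ne_zero_iff.mpr (fun i _ => hdz z hz.le i)
    rw [hevalN, hevalD, Finset.prod_div_distrib, hcdef]
    rw [mul_div_assoc', div_eq_div_iff hYne (mul_ne_zero (inv_ne_zero hcBne) hYne)]
    field_simp
  have hd1n : d + 1 ≤ n := by omega
  have hfq := key d q f c N hc hNdeg hDnz hq' hf hf1 (fun j => lam (Fin.castLE hd1n j))
    (fun j => by
      exact mem_ball_zero_iff.mp (hlam _))
    (hinj.comp (Fin.castLE_injective hd1n)) (fun j => hinterp _)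
  intro z hz
  exact hfq z (by exact mem_ball_zero_iff.mp hz)
end

section
/- For every (s,p) ∈ Γ and every z ∈ ℂ with |z| = 1, one has |2 − zs|² − |2zp − s|² ≥ 0; equivalently, whenever 2 − zs ≠ 0, |Φ(z, s, p)| ≤ 1. -/
open Set

/-- For `(s,p)` in the closed symmetrized bidisc `Γ` and `|z| = 1`,
one has `|2 − zs|² − |2zp − s|² ≥ 0`; equivalently, whenever `2 − zs ≠ 0`,
`|Φ(z, s, p)| ≤ 1`. -/
theorem Phi_criterion (s p z : ℂ)
    (hsp : (s, p) ∈ {x : ℂ × ℂ | ∃ z w : ℂ, ‖z‖ ≤ 1 ∧ ‖w‖ ≤ 1 ∧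
      x = (z + w, z * w)})
    (hz : ‖z‖ = 1) :
    (‖2 - z * s‖)^2 - (‖2 * z * p - s‖)^2 ≥ 0 ∧
    (2 - z * s ≠ 0 → ‖Phi z s p‖ ≤ 1) := by
  obtain ⟨a, b, ha, hb, heq⟩ := hsp
  rw [Prod.mk.injEq] at heq
  obtain ⟨hs, hp⟩ := heq
  subst hs hp
  have hz2 : z.re ^ 2 + z.im ^ 2 = 1 := by
    have h : Complex.normSq z = 1 := by rw [← Complex.sq_norm, hz]; norm_num
    simpa [Complex.normSq_apply, pow_two] using h
  have key : (‖2 - z * (a + b)‖)^2 - (‖2 * z * (a * b) - (a + b)‖)^2 =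
      4 * ((1 - Complex.normSq a * Complex.normSq b)
        - (z * a).re * (1 - Complex.normSq b) - (z * b).re * (1 - Complex.normSq a)) := by
    rw [Complex.sq_norm, Complex.sq_norm]
    simp only [Complex.normSq_apply, Complex.mul_re, Complex.mul_im, Complex.sub_re,
      Complex.sub_im, Complex.add_re, Complex.add_im, Complex.re_ofNat, Complex.im_ofNat]
    linear_combination ((a.re + b.re)^2 + (a.im + b.im)^2
      - 4 * (a.re^2 + a.im^2) * (b.re^2 + b.im^2)) * hz2
  have hxa : (z * a).re ≤ ‖a‖ := by
    refine le_trans (Complex.re_le_norm _) ?_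
    rw [norm_mul, hz, one_mul]
  have hxb : (z * b).re ≤ ‖b‖ := by
    refine le_trans (Complex.re_le_norm _) ?_
    rw [norm_mul, hz, one_mul]
  have hna : Complex.normSq a = (‖a‖) ^ 2 := (Complex.sq_norm a).symm
  have hnb : Complex.normSq b = (‖b‖) ^ 2 := (Complex.sq_norm b).symm
  have hA0 : 0 ≤ ‖a‖ := norm_nonneg _
  have hB0 : 0 ≤ ‖b‖ := norm_nonneg _
  have main : (‖2 - z * (a + b)‖)^2 - (‖2 * z * (a * b) - (a + b)‖)^2 ≥ 0 := by
    rw [key, hna, hnb]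
    set A := ‖a‖
    set B := ‖b‖
    have h1 : 0 ≤ (1 - A) * (1 - B) * (1 - A * B) := by
      apply mul_nonneg (mul_nonneg (by linarith) (by linarith))
      nlinarith
    have h2 : 0 ≤ (A - (z * a).re) * (1 - B ^ 2) := by
      apply mul_nonneg (by linarith)
      nlinarith
    have h3 : 0 ≤ (B - (z * b).re) * (1 - A ^ 2) := by
      apply mul_nonneg (by linarith)
      nlinarith
    nlinarith [h1, h2, h3]
  refine ⟨main, fun hne => ?_⟩
  rw [Phi, norm_div, div_le_one (norm_pos_iff.mpr hne)]
  nlinarith [main, norm_nonneg (2 - z * (a + b)),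
    norm_nonneg (2 * z * (a * b) - (a + b))]
end
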